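/- arXiv:2303.06617 — 6 statements merged into one kernel-verified Lean document; each statement's English description precedes it below -/
import Mathlib

section
/- Let -π/2 ≤ θ_1 < θ_2 < ⋯ < θ_n ≤ π/2 with λ = min_{s≠t} |θ_s - θ_t|, and let 0 < d ≤ λ/2. Then for every θ ∈ [-π/2, π/2] with min_j |θ - θ_j| ≥ d, we have ∏_{j=1}^n |θ - θ_j| ≥ ((n-1)!/2^{n-1}) · d · λ^{n-1}. -/
open Real Finset

theorem stmt_1 (n : ℕ) (hn : 1 ≤ n) (θ : Fin n → ℝ)
    (hrange : ∀ j, θ j ∈ Set.Icc (-(π / 2)) (π / 2))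
    (hmono : StrictMono θ)
    (lam d : ℝ)
    (hlam : IsLeast {r : ℝ | ∃ s t : Fin n, s ≠ t ∧ r = |θ s - θ t|} lam)
    (hd0 : 0 < d) (hd : d ≤ lam / 2)
    (θ' : ℝ) (hθ' : θ' ∈ Set.Icc (-(π / 2)) (π / 2))
    (hsep : ∀ j, d ≤ |θ' - θ j|) :
    ((Nat.factorial (n - 1) : ℝ) / 2 ^ (n - 1)) * d * lam ^ (n - 1) ≤
      ∏ j : Fin n, |θ' - θ j| := by
  classical
  obtain ⟨⟨s0, t0, hst0, hlam_eq⟩, hlb⟩ := hlam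
  have hlam_pos : 0 < lam := by
    rw [hlam_eq]
    exact abs_pos.mpr (sub_ne_zero.mpr fun h => hst0 (hmono.injective h))
  have hlb' : ∀ s t : Fin n, s ≠ t → lam ≤ |θ s - θ t| := fun s t h => hlb ⟨s, t, h, rfl⟩
  have gap : ∀ k : ℕ, ∀ s t : Fin n, s.val + k ≤ t.val → (k : ℝ) * lam ≤ θ t - θ s := by
    intro k
    induction k with
    | zero =>
      intro s t h
      simpa using sub_nonneg.mpr (hmono.monotone (Fin.le_def.mpr (by omega)))
    | succ k ih =>
      intro s t h
      have hs1 : s.val + 1 < n := by omega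
      set u : Fin n := ⟨s.val + 1, hs1⟩ with hu
      have h1 : lam ≤ θ u - θ s := by
        have hne : s ≠ u := by simp [Fin.ext_iff, hu]
        have hlt : θ s < θ u := hmono (by simp [Fin.lt_def, hu])
        have := hlb' s u hne
        rwa [abs_sub_comm, abs_of_pos (sub_pos.mpr hlt)] at this
      have h2 : (k : ℝ) * lam ≤ θ t - θ u := ih u t (by simp [hu]; omega)
      push_cast
      linarith
  obtain ⟨m, rfl⟩ : ∃ m, n = m + 1 := ⟨n - 1, by omega⟩
  set f : Fin (m + 1) → ℝ := fun j => |θ' - θ j| with hf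
  set σ := Tuple.sort f with hσ
  have hmonog : Monotone (f ∘ σ) := Tuple.monotone_sort f
  have key : ∀ k : Fin (m + 1), (k : ℝ) * lam ≤ 2 * f (σ k) := by
    intro k
    set T : Finset ℕ := (Finset.Iic k).image (fun i => (σ i).val) with hT
    have hcard : T.card = k.val + 1 := by
      rw [hT, Finset.card_image_of_injective _
        (fun a b hab => σ.injective (Fin.val_injective hab)), Fin.card_Iic]
    have hne : T.Nonempty := by
      rw [← Finset.card_pos, hcard]; omega
    have hminmax : T.min' hne + k.val ≤ T.max' hne := by
      have hsub : T ⊆ Finset.Icc (T.min' hne) (T.max' hne) := fun x hx =>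
        Finset.mem_Icc.mpr ⟨Finset.min'_le _ _ hx, Finset.le_max' _ _ hx⟩
      have := Finset.card_le_card hsub
      rw [Nat.card_Icc, hcard] at this; omega
    obtain ⟨i, hi, hia⟩ := Finset.mem_image.mp (T.min'_mem hne)
    obtain ⟨j, hj, hjb⟩ := Finset.mem_image.mp (T.max'_mem hne)
    have hg : (k.val : ℝ) * lam ≤ θ (σ j) - θ (σ i) :=
      gap k.val (σ i) (σ j) (by rw [hia, hjb]; exact hminmax)
    have hfi : f (σ i) ≤ f (σ k) := hmonog (Finset.mem_Iic.mp hi)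
    have hfj : f (σ j) ≤ f (σ k) := hmonog (Finset.mem_Iic.mp hj)
    have h1 : θ (σ j) - θ' ≤ f (σ j) := by
      rw [hf]; dsimp only; rw [abs_sub_comm]; exact le_abs_self _
    have h2 : θ' - θ (σ i) ≤ f (σ i) := le_abs_self _
    linarith
  have hpt : ∀ j : Fin (m + 1), (if j = 0 then d else (j : ℝ) * lam / 2) ≤ f (σ j) := by
    intro j
    by_cases hj : j = 0
    · simp [hj]; exact hsep _
    · simp only [hj, if_false]
      have := key j
      linarith
  have hprodle : (∏ j : Fin (m + 1), (if j = 0 then d else (j : ℝ) * lam / 2)) ≤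
      ∏ j : Fin (m + 1), f (σ j) := by
    refine Finset.prod_le_prod (fun j _ => ?_) (fun j _ => hpt j)
    by_cases hj : j = 0
    · simp [hj]; exact hd0.le
    · simp only [hj, if_false]
      have h0 : (0:ℝ) ≤ ((j:ℕ):ℝ) := Nat.cast_nonneg _
      positivity
  have hσprod : (∏ j : Fin (m + 1), f (σ j)) = ∏ j : Fin (m + 1), f j :=
    Equiv.prod_comp σ f
  have hlhs : (∏ j : Fin (m + 1), (if j = 0 then d else (j : ℝ) * lam / 2)) =
      d * ((Nat.factorial m : ℝ) * (lam / 2) ^ m) := by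
    rw [Fin.prod_univ_succ]
    simp only [if_pos rfl]
    congr 1
    have : ∀ i : Fin m, (if (i.succ : Fin (m+1)) = 0 then d else ((i.succ : Fin (m+1)) : ℝ) * lam / 2)
        = ((i : ℝ) + 1) * (lam / 2) := by
      intro i
      rw [if_neg (Fin.succ_ne_zero i)]
      push_cast [Fin.val_succ]
      ring
    rw [Finset.prod_congr rfl (fun i _ => this i), Finset.prod_mul_distrib,
      Finset.prod_const, Fin.prod_univ_eq_prod_range (fun i => (i : ℝ) + 1)]
    have : (∏ i ∈ Finset.range m, ((i : ℝ) + 1)) = (Nat.factorial m : ℝ) := by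
      rw [← Finset.prod_range_add_one_eq_factorial]
      push_cast
      rfl
    rw [this, Finset.card_univ, Fintype.card_fin]
  have : ((Nat.factorial (m + 1 - 1) : ℝ) / 2 ^ (m + 1 - 1)) * d * lam ^ (m + 1 - 1)
      = d * ((Nat.factorial m : ℝ) * (lam / 2) ^ m) := by
    simp only [Nat.add_sub_cancel, div_pow]
    ring
  rw [this, ← hlhs, ← hσprod]
  exact hprodle
end

section
/- Let μ = M δ_y with M > 2σ > 0, let Y(ω) = M e^{iyω} + W(ω) with |W(ω)| < σ for ω ∈ [-Ω,Ω], let H be the (K+1)×(K+1) Hankel matrix generated by the samples Y(ω_m), ω_m = mΩ/K, m = -K,…,K, and let N = H*H. Then Tr(N)^2 / Tr(N*N) ≤ (1 + 4K σ²/M²)². -/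
open Matrix Complex

private lemma var_bound {n : ℕ} (hn : 0 < (n : ℝ)) (s : Fin n → ℂ) (b : ℂ) :
    ∑ k, Complex.normSq (s k) ≤
      Complex.normSq (∑ k, s k) / n + ∑ k, Complex.normSq (s k - b) := by
  set S := ∑ k, s k with hS
  have h1 : (S * (starRingEnd ℂ) b).re = ∑ k, (s k * (starRingEnd ℂ) b).re := by
    rw [hS, Finset.sum_mul, Complex.re_sum]
  have hterm : ∀ k : Fin n, Complex.normSq (s k - b)
      = Complex.normSq (s k) + Complex.normSq b - 2 * (s k * (starRingEnd ℂ) b).re := by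
    intro k
    rw [Complex.normSq_sub]
  have hexp : ∑ k, Complex.normSq (s k - b)
      = (∑ k, Complex.normSq (s k) + (n : ℝ) * Complex.normSq b)
        - 2 * (S * (starRingEnd ℂ) b).re := by
    rw [Finset.sum_congr rfl fun k _ => hterm k, Finset.sum_sub_distrib,
      Finset.sum_add_distrib, Finset.sum_const, Finset.card_univ, Fintype.card_fin,
      nsmul_eq_mul, h1, ← Finset.mul_sum]
  have hsq : 0 ≤ Complex.normSq S - 2 * (n : ℝ) * (S * (starRingEnd ℂ) b).re
      + (n : ℝ) ^ 2 * Complex.normSq b := by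
    have h0 := Complex.normSq_nonneg (S - (n : ℂ) * b)
    rw [Complex.normSq_sub] at h0
    have e1 : Complex.normSq ((n : ℂ) * b) = (n : ℝ) ^ 2 * Complex.normSq b := by
      rw [Complex.normSq_mul, show ((n : ℕ) : ℂ) = (((n : ℕ) : ℝ) : ℂ) from by push_cast; rfl,
        Complex.normSq_ofReal]
      ring
    have e2 : (S * (starRingEnd ℂ) ((n : ℂ) * b)).re
        = (n : ℝ) * (S * (starRingEnd ℂ) b).re := by
      rw [_root_.map_mul, Complex.conj_natCast,
        show S * ((n : ℂ) * (starRingEnd ℂ) b) = (n : ℂ) * (S * (starRingEnd ℂ) b) from by ring,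
        show ((n : ℕ) : ℂ) = (((n : ℕ) : ℝ) : ℂ) from by push_cast; rfl]
      exact Complex.re_ofReal_mul _ _
    rw [e1, e2] at h0
    linarith
  rw [hexp]
  have hdiv : Complex.normSq S / n * n = Complex.normSq S :=
    div_mul_cancel₀ _ hn.ne'
  nlinarith [hsq, hn, hdiv]

private lemma trace_star_mul {m : ℕ} (B : Matrix (Fin m) (Fin m) ℂ) :
    Matrix.trace (Bᴴ * B) = ((∑ i, ∑ j, Complex.normSq (B i j) : ℝ) : ℂ) := by
  rw [Matrix.trace]
  simp only [Matrix.diag_apply, Matrix.mul_apply, Matrix.conjTranspose_apply]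
  push_cast
  rw [Finset.sum_comm]
  refine Finset.sum_congr rfl fun i _ => Finset.sum_congr rfl fun j _ => ?_
  rw [mul_comm]
  exact Complex.mul_conj _

set_option maxHeartbeats 1000000 in
theorem stmt_6 (K : ℕ) (hK : 1 ≤ K) (Ω : ℝ) (hΩ : 0 < Ω) (y M σ : ℝ)
    (hσ : 0 < σ) (hM : 2 * σ < M) (W : ℤ → ℂ)
    (hW : ∀ m : ℤ, |m| ≤ (K : ℤ) → ‖W m‖ < σ)
    (H : Matrix (Fin (K + 1)) (Fin (K + 1)) ℂ)
    (hH : ∀ j k : Fin (K + 1),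
      H j k = M * Complex.exp (Complex.I * (y * ((((j : ℤ) + k - K) : ℤ) * Ω / K)))
        + W ((j : ℤ) + k - K))
    (N : Matrix (Fin (K + 1)) (Fin (K + 1)) ℂ) (hN : N = Hᴴ * H) :
    (Matrix.trace N).re ^ 2 / (Matrix.trace (Nᴴ * N)).re ≤ (1 + 4 * K * σ ^ 2 / M ^ 2) ^ 2 := by
  have hK1 : (1 : ℝ) ≤ K := by exact_mod_cast hK
  have hKR : (0 : ℝ) < K := by linarith
  have hKc : (K : ℂ) ≠ 0 := by
    exact_mod_cast (show ((K : ℝ) : ℂ) ≠ 0 by exact_mod_cast hKR.ne')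
  have hMpos : 0 < M := by linarith
  have hnR : (0 : ℝ) < ((K + 1 : ℕ) : ℝ) := by positivity
  set a : Fin (K + 1) → ℂ := fun j => Complex.exp (Complex.I * (y * ((j : ℕ) * Ω / K))) with ha
  set d : ℂ := M * Complex.exp (-(Complex.I * (y * Ω))) with hd
  set g : Fin (K + 1) → ℂ := fun i => ∑ k, H i k * (starRingEnd ℂ) (a k) with hg
  have habs_a : ∀ k : Fin (K + 1), ‖a k‖ = 1 := by
    intro k
    simp only [ha]
    rw [show Complex.I * ((y : ℂ) * ((k : ℕ) * Ω / K))
        = ((y * ((k : ℕ) * Ω / K) : ℝ) : ℂ) * Complex.I from by push_cast; ring]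
    exact Complex.norm_exp_ofReal_mul_I _
  have hns_a : ∀ k : Fin (K + 1), Complex.normSq (a k) = 1 := by
    intro k
    rw [← Complex.sq_norm, habs_a]; norm_num
  have habs_d : ‖d‖ = M := by
    rw [hd, norm_mul,
      show -(Complex.I * ((y : ℂ) * Ω)) = ((-(y * Ω) : ℝ) : ℂ) * Complex.I from by push_cast; ring,
      Complex.norm_exp_ofReal_mul_I, Complex.norm_real, Real.norm_eq_abs, abs_of_pos hMpos, mul_one]
  have hentry : ∀ i k : Fin (K + 1), H i k = d * a i * a k + W ((i : ℤ) + k - K) := by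
    intro i k
    rw [hH i k]
    congr 1
    simp only [hd, ha]
    rw [show (M : ℂ) * Complex.exp (-(Complex.I * (y * Ω)))
          * Complex.exp (Complex.I * (y * ((i : ℕ) * Ω / K)))
          * Complex.exp (Complex.I * (y * ((k : ℕ) * Ω / K)))
        = (M : ℂ) * Complex.exp (-(Complex.I * (y * Ω)) + Complex.I * (y * ((i : ℕ) * Ω / K))
          + Complex.I * (y * ((k : ℕ) * Ω / K))) from by
        rw [Complex.exp_add, Complex.exp_add]; ring]
    congr 2
    push_cast
    field_simp
    ring
  have hWb : ∀ i k : Fin (K + 1), ‖W ((i : ℤ) + k - K)‖ ≤ σ := by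
    intro i k
    have hi : (i : ℕ) < K + 1 := i.isLt
    have hk : (k : ℕ) < K + 1 := k.isLt
    refine (hW _ ?_).le
    rw [abs_le]
    constructor <;> push_cast <;> omega
  have huk : ∀ i k : Fin (K + 1), H i k * (starRingEnd ℂ) (a k)
      = d * a i + W ((i : ℤ) + k - K) * (starRingEnd ℂ) (a k) := by
    intro i k
    rw [hentry i k, add_mul, mul_assoc, Complex.mul_conj, hns_a]
    simp
  set T : ℝ := ∑ i, ∑ j, Complex.normSq (H i j) with hT
  set D : ℝ := ∑ i, ∑ j, Complex.normSq (N i j) with hD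
  set Q : ℝ := ∑ i, Complex.normSq (g i) with hQ
  have htrN : (Matrix.trace N).re = T := by
    rw [hN, trace_star_mul, Complex.ofReal_re]
  have htrD : (Matrix.trace (Nᴴ * N)).re = D := by
    rw [trace_star_mul, Complex.ofReal_re]
  have hQnn : 0 ≤ Q := Finset.sum_nonneg fun i _ => Complex.normSq_nonneg _
  have hTnn : 0 ≤ T :=
    Finset.sum_nonneg fun i _ => Finset.sum_nonneg fun j _ => Complex.normSq_nonneg _
  -- per-row bound
  have hrow : ∀ i : Fin (K + 1), ∑ k, Complex.normSq (H i k)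
      ≤ Complex.normSq (g i) / ((K + 1 : ℕ) : ℝ) + ((K + 1 : ℕ) : ℝ) * σ ^ 2 := by
    intro i
    calc ∑ k, Complex.normSq (H i k)
        = ∑ k, Complex.normSq (H i k * (starRingEnd ℂ) (a k)) := by
          refine Finset.sum_congr rfl fun k _ => ?_
          rw [Complex.normSq_mul, Complex.normSq_conj, hns_a, mul_one]
      _ ≤ Complex.normSq (∑ k, H i k * (starRingEnd ℂ) (a k)) / ((K + 1 : ℕ) : ℝ)
          + ∑ k, Complex.normSq (H i k * (starRingEnd ℂ) (a k) - d * a i) :=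
          var_bound hnR _ (d * a i)
      _ = Complex.normSq (g i) / ((K + 1 : ℕ) : ℝ)
          + ∑ k : Fin (K + 1), Complex.normSq (W ((i : ℤ) + k - K) * (starRingEnd ℂ) (a k)) := by
          simp only [hg]
          congr 1
          refine Finset.sum_congr rfl fun k _ => ?_
          rw [huk i k, add_sub_cancel_left]
      _ ≤ Complex.normSq (g i) / ((K + 1 : ℕ) : ℝ) + ∑ _k : Fin (K + 1), σ ^ 2 := by
          gcongr with k _
          rw [Complex.normSq_mul, Complex.normSq_conj, hns_a, mul_one, ← Complex.sq_norm]
          exact pow_le_pow_left₀ (norm_nonneg _) (hWb i k) 2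
      _ = Complex.normSq (g i) / ((K + 1 : ℕ) : ℝ) + ((K + 1 : ℕ) : ℝ) * σ ^ 2 := by
          rw [Finset.sum_const, Finset.card_univ, Fintype.card_fin, nsmul_eq_mul]
  have hTQ : T ≤ Q / ((K + 1 : ℕ) : ℝ) + ((K + 1 : ℕ) : ℝ) ^ 2 * σ ^ 2 := by
    rw [hT, hQ]
    calc ∑ i, ∑ j, Complex.normSq (H i j)
        ≤ ∑ i : Fin (K + 1),
            (Complex.normSq (g i) / ((K + 1 : ℕ) : ℝ) + ((K + 1 : ℕ) : ℝ) * σ ^ 2) :=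
          Finset.sum_le_sum fun i _ => hrow i
      _ = (∑ i, Complex.normSq (g i)) / ((K + 1 : ℕ) : ℝ) + ((K + 1 : ℕ) : ℝ) ^ 2 * σ ^ 2 := by
          rw [Finset.sum_add_distrib, Finset.sum_const, Finset.card_univ, Fintype.card_fin,
            nsmul_eq_mul, ← Finset.sum_div]
          ring
  -- lower bound on Q
  have hMσ : 0 < M - σ := by linarith
  have hglow : ∀ i : Fin (K + 1), ((K + 1 : ℕ) : ℝ) * (M - σ) ≤ ‖g i‖ := by
    intro i
    have hgi : g i = ((K + 1 : ℕ) : ℂ) * (d * a i)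
        + ∑ k : Fin (K + 1), W ((i : ℤ) + k - K) * (starRingEnd ℂ) (a k) := by
      simp only [hg]
      rw [Finset.sum_congr rfl fun k _ => huk i k, Finset.sum_add_distrib, Finset.sum_const,
        Finset.card_univ, Fintype.card_fin, nsmul_eq_mul]
    have hX : ‖((K + 1 : ℕ) : ℂ) * (d * a i)‖ = ((K + 1 : ℕ) : ℝ) * M := by
      rw [norm_mul, norm_mul, habs_a, habs_d, mul_one, Complex.norm_natCast]
    have hS : ‖∑ k : Fin (K + 1), W ((i : ℤ) + k - K) * (starRingEnd ℂ) (a k)‖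
        ≤ ((K + 1 : ℕ) : ℝ) * σ := by
      refine le_trans (norm_sum_le _ _) ?_
      calc ∑ k : Fin (K + 1), ‖W ((i : ℤ) + k - K) * (starRingEnd ℂ) (a k)‖
          ≤ ∑ _k : Fin (K + 1), σ := by
            refine Finset.sum_le_sum fun k _ => ?_
            rw [norm_mul, Complex.norm_conj, habs_a, mul_one]
            exact hWb i k
        _ = ((K + 1 : ℕ) : ℝ) * σ := by
            rw [Finset.sum_const, Finset.card_univ, Fintype.card_fin, nsmul_eq_mul]
    have h4 := norm_sub_norm_le (((K + 1 : ℕ) : ℂ) * (d * a i))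
      (-(∑ k : Fin (K + 1), W ((i : ℤ) + k - K) * (starRingEnd ℂ) (a k)))
    rw [sub_neg_eq_add, norm_neg] at h4
    rw [hgi]
    rw [hX] at h4
    linarith
  have hQlow : ((K + 1 : ℕ) : ℝ) ^ 3 * (M - σ) ^ 2 ≤ Q := by
    rw [hQ]
    calc ((K + 1 : ℕ) : ℝ) ^ 3 * (M - σ) ^ 2
        = ∑ _i : Fin (K + 1), ((K + 1 : ℕ) : ℝ) ^ 2 * (M - σ) ^ 2 := by
          rw [Finset.sum_const, Finset.card_univ, Fintype.card_fin, nsmul_eq_mul]; ring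
      _ ≤ ∑ i, Complex.normSq (g i) := by
          refine Finset.sum_le_sum fun i _ => ?_
          rw [← Complex.sq_norm]
          have h0 : 0 ≤ ((K + 1 : ℕ) : ℝ) * (M - σ) := by positivity
          calc ((K + 1 : ℕ) : ℝ) ^ 2 * (M - σ) ^ 2 = (((K + 1 : ℕ) : ℝ) * (M - σ)) ^ 2 := by ring
            _ ≤ ‖g i‖ ^ 2 := pow_le_pow_left₀ h0 (hglow i) 2
  -- Cauchy–Schwarz:  Q² ≤ n² D
  have hNa : ∀ j k : Fin (K + 1), N j k = ∑ i, (starRingEnd ℂ) (H i j) * H i k := by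
    intro j k
    rw [hN]
    simp [Matrix.mul_apply, Matrix.conjTranspose_apply]
  have hid : ((Q : ℝ) : ℂ) = ∑ j, ∑ k, (a j * (starRingEnd ℂ) (a k)) * N j k := by
    have e0 : ((Q : ℝ) : ℂ) = ∑ i, (starRingEnd ℂ) (g i) * g i := by
      rw [hQ]
      push_cast
      refine Finset.sum_congr rfl fun i _ => ?_
      rw [mul_comm, Complex.mul_conj]
    rw [e0]
    calc ∑ i, (starRingEnd ℂ) (g i) * g i
        = ∑ i, ∑ j, ∑ k, (a j * (starRingEnd ℂ) (a k))
            * ((starRingEnd ℂ) (H i j) * H i k) := by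
          refine Finset.sum_congr rfl fun i _ => ?_
          simp only [hg]
          rw [map_sum, Finset.sum_mul_sum]
          refine Finset.sum_congr rfl fun j _ => Finset.sum_congr rfl fun k _ => ?_
          simp only [_root_.map_mul, Complex.conj_conj]
          ring
      _ = ∑ j, ∑ k, (a j * (starRingEnd ℂ) (a k)) * N j k := by
          rw [Finset.sum_comm]
          refine Finset.sum_congr rfl fun j _ => ?_
          rw [Finset.sum_comm]
          refine Finset.sum_congr rfl fun k _ => ?_
          rw [hNa j k, Finset.mul_sum]
  have hQabs : Q ≤ ∑ j, ∑ k, ‖N j k‖ := by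
    have e : Q = ‖((Q : ℝ) : ℂ)‖ := by
      rw [Complex.norm_real, Real.norm_eq_abs, _root_.abs_of_nonneg hQnn]
    rw [e, hid]
    refine le_trans (norm_sum_le _ _) (Finset.sum_le_sum fun j _ =>
      le_trans (norm_sum_le _ _) (Finset.sum_le_sum fun k _ => ?_))
    rw [norm_mul, norm_mul, Complex.norm_conj, habs_a, habs_a, mul_one, one_mul]
  have hCS : Q ^ 2 ≤ ((K + 1 : ℕ) : ℝ) ^ 2 * D := by
    have h2 := sq_sum_le_card_mul_sum_sq
      (s := (Finset.univ : Finset (Fin (K + 1) × Fin (K + 1))))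
      (f := fun p => ‖N p.1 p.2‖)
    rw [Finset.card_univ] at h2
    have e1 : ∑ p : Fin (K + 1) × Fin (K + 1), ‖N p.1 p.2‖
        = ∑ j, ∑ k, ‖N j k‖ := Fintype.sum_prod_type _
    have e2 : ∑ p : Fin (K + 1) × Fin (K + 1), ‖N p.1 p.2‖ ^ 2 = D := by
      rw [hD, Fintype.sum_prod_type]
      exact Finset.sum_congr rfl fun j _ => Finset.sum_congr rfl fun k _ => Complex.sq_norm _
    rw [e1, e2] at h2
    have e3 : ((Fintype.card (Fin (K + 1) × Fin (K + 1)) : ℕ) : ℝ) = ((K + 1 : ℕ) : ℝ) ^ 2 := by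
      rw [Fintype.card_prod, Fintype.card_fin]
      push_cast
      ring
    rw [e3] at h2
    have h5 : Q ^ 2 ≤ (∑ j, ∑ k, ‖N j k‖) ^ 2 :=
      pow_le_pow_left₀ hQnn hQabs 2
    linarith
  -- final arithmetic
  rw [htrN, htrD]
  have hQpos : 0 < Q := lt_of_lt_of_le (by positivity) hQlow
  have hDpos : 0 < D := by nlinarith [hCS, hQpos, hnR]
  set R : ℝ := 1 + 4 * K * σ ^ 2 / M ^ 2 with hR
  have hRnn : 0 ≤ R := by positivity
  have hkey : T * ((K + 1 : ℕ) : ℝ) ≤ R * Q := by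
    have h1 : T * ((K + 1 : ℕ) : ℝ) ≤ Q + ((K + 1 : ℕ) : ℝ) ^ 3 * σ ^ 2 := by
      have e : (Q / ((K + 1 : ℕ) : ℝ) + ((K + 1 : ℕ) : ℝ) ^ 2 * σ ^ 2) * ((K + 1 : ℕ) : ℝ)
          = Q + ((K + 1 : ℕ) : ℝ) ^ 3 * σ ^ 2 := by
        field_simp
      nlinarith [mul_le_mul_of_nonneg_right hTQ hnR.le, e]
    have hQ2 : ((K + 1 : ℕ) : ℝ) ^ 3 * (M ^ 2 / 4) ≤ Q := by
      refine le_trans ?_ hQlow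
      have hh : M / 2 ≤ M - σ := by linarith
      have h9 : M ^ 2 / 4 ≤ (M - σ) ^ 2 := by nlinarith [hh, hMpos]
      exact mul_le_mul_of_nonneg_left h9 (by positivity)
    have h2 : ((K + 1 : ℕ) : ℝ) ^ 3 * σ ^ 2 ≤ 4 * σ ^ 2 / M ^ 2 * Q := by
      have e : 4 * σ ^ 2 / M ^ 2 * (((K + 1 : ℕ) : ℝ) ^ 3 * (M ^ 2 / 4))
          = ((K + 1 : ℕ) : ℝ) ^ 3 * σ ^ 2 := by
        field_simp
      calc ((K + 1 : ℕ) : ℝ) ^ 3 * σ ^ 2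
          = 4 * σ ^ 2 / M ^ 2 * (((K + 1 : ℕ) : ℝ) ^ 3 * (M ^ 2 / 4)) := e.symm
        _ ≤ 4 * σ ^ 2 / M ^ 2 * Q := mul_le_mul_of_nonneg_left hQ2 (by positivity)
    have h3 : 4 * σ ^ 2 / M ^ 2 * Q ≤ 4 * K * σ ^ 2 / M ^ 2 * Q := by
      refine mul_le_mul_of_nonneg_right ?_ hQpos.le
      gcongr
      nlinarith [hK1, sq_nonneg σ]
    calc T * ((K + 1 : ℕ) : ℝ) ≤ Q + ((K + 1 : ℕ) : ℝ) ^ 3 * σ ^ 2 := h1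
      _ ≤ Q + 4 * K * σ ^ 2 / M ^ 2 * Q := by linarith
      _ = R * Q := by rw [hR]; ring
  rw [div_le_iff₀ hDpos]
  have h5 : (T * ((K + 1 : ℕ) : ℝ)) ^ 2 ≤ (R * Q) ^ 2 := pow_le_pow_left₀ (mul_nonneg hTnn hnR.le) hkey 2
  have h6 : R ^ 2 * Q ^ 2 ≤ R ^ 2 * (((K + 1 : ℕ) : ℝ) ^ 2 * D) :=
    mul_le_mul_of_nonneg_left hCS (by positivity)
  nlinarith [h5, h6, mul_pos hnR hnR, sq_nonneg (T * ((K + 1 : ℕ) : ℝ))]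
end

section
/- Let μ = ∑_{j=1}^n a_j δ_{y_j} with distinct y_j ∈ ℝ, and suppose there is an index s with |a_s| = max_j |a_j| and |a_s| > ∑_{t≠s} |a_t| + σ. Let H be the (K+1)×(K+1) Hankel matrix with entries H_{jk} = ∑_{l=1}^n a_l e^{iy_l ω_{j+k-K}} + W_{j+k-K}, where ω_m = mΩ/K and |W_m| < σ, and let N = H*H. Then Tr(N)²/Tr(N*N) ≤ ((|a_s| + ∑_{t≠s}|a_t| + σ)/(|a_s| - ∑_{t≠s}|a_t| - σ))⁴. -/
open Matrix Complex Finset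

/-- Trace of `Mᴴ * M` is the squared Frobenius norm. -/
lemma stmt8_frob {m : ℕ} (M : Matrix (Fin m) (Fin m) ℂ) :
    (Matrix.trace (Mᴴ * M)).re = ∑ j, ∑ k, Complex.normSq (M k j) := by
  simp only [Matrix.trace, Matrix.diag, Matrix.mul_apply, Matrix.conjTranspose_apply]
  have : ∀ j : Fin m, ∑ k, (starRingEnd ℂ) (M k j) * M k j
      = ((∑ k, Complex.normSq (M k j) : ℝ) : ℂ) := by
    intro j; push_cast; exact Finset.sum_congr rfl fun k _ => by rw [mul_comm, Complex.mul_conj]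
  simp [this]

theorem stmt_8 (n : ℕ) (hn : 1 ≤ n) (K : ℕ) (hK : 1 ≤ K) (Ω : ℝ) (hΩ : 0 < Ω)
    (σ : ℝ) (hσ : 0 < σ) (y : Fin n → ℝ) (hy : Function.Injective y)
    (a : Fin n → ℂ) (s : Fin n)
    (hmax : ∀ j, ‖a j‖ ≤ ‖a s‖)
    (hdom : (∑ t ∈ Finset.univ.erase s, ‖a t‖) + σ < ‖a s‖)
    (W : ℤ → ℂ) (hW : ∀ m : ℤ, |m| ≤ (K : ℤ) → ‖W m‖ < σ)
    (H : Matrix (Fin (K + 1)) (Fin (K + 1)) ℂ)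
    (hH : ∀ j k : Fin (K + 1),
      H j k = (∑ l : Fin n, a l * Complex.exp (Complex.I * (y l * ((((j : ℤ) + k - K) : ℤ) * Ω / K))))
        + W ((j : ℤ) + k - K))
    (N : Matrix (Fin (K + 1)) (Fin (K + 1)) ℂ) (hN : N = Hᴴ * H) :
    (Matrix.trace N).re ^ 2 / (Matrix.trace (Nᴴ * N)).re ≤
      ((‖a s‖ + (∑ t ∈ Finset.univ.erase s, ‖a t‖) + σ) /
        (‖a s‖ - (∑ t ∈ Finset.univ.erase s, ‖a t‖) - σ)) ^ 4 := by
  classical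
  set R := ∑ t ∈ Finset.univ.erase s, ‖a t‖ with hRdef
  set A := ‖a s‖ + R + σ with hAdef
  set B := ‖a s‖ - R - σ with hBdef
  have hRnn : 0 ≤ R := Finset.sum_nonneg fun t _ => (norm_nonneg _)
  have hB : 0 < B := by rw [hBdef]; linarith
  have hApos : 0 < A := by have := norm_nonneg (a s); rw [hAdef]; linarith
  set c : ℝ := (K : ℝ) + 1 with hcdef
  have hc : (0:ℝ) < c := by positivity
  -- |m| ≤ K for the relevant indices
  have hmK : ∀ j k : Fin (K + 1), |(j : ℤ) + k - K| ≤ (K : ℤ) := by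
    intro j k
    have h1 := j.isLt; have h2 := k.isLt
    rw [abs_le]
    omega
  -- the exponentials have modulus one
  have habs_exp : ∀ (t : ℝ), ‖Complex.exp (Complex.I * (t : ℂ))‖ = 1 := by
    intro t; simp [Complex.norm_exp]
  have hEabs : ∀ (w : ℝ) (m : ℤ), ‖Complex.exp (Complex.I * (w * ((m : ℂ) * Ω / K)))‖ = 1 := by
    intro w m
    have h : ((w : ℂ) * ((m : ℂ) * (Ω : ℂ) / (K : ℂ))) = ((w * ((m : ℝ) * Ω / K) : ℝ) : ℂ) := by
      push_cast; ring
    rw [h, habs_exp]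
  have hE'abs : ∀ (w : ℝ) (m : ℤ), ‖Complex.exp (-(Complex.I * (w * ((m : ℂ) * Ω / K))))‖ = 1 := by
    intro w m
    have h : (-(Complex.I * ((w : ℂ) * ((m : ℂ) * (Ω : ℂ) / (K : ℂ)))))
        = Complex.I * ((-(w * ((m : ℝ) * Ω / K)) : ℝ) : ℂ) := by push_cast; ring
    rw [h, habs_exp]
  -- sum of |a l| over all l
  have hsum_a : ∑ l, ‖a l‖ = ‖a s‖ + R := by
    rw [hRdef, ← Finset.add_sum_erase _ _ (Finset.mem_univ s)]
  -- entrywise bound on H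
  have hentry : ∀ j k : Fin (K + 1), ‖H j k‖ ≤ A := by
    intro j k
    rw [hH]
    refine le_trans (norm_add_le _ _) ?_
    have h1 : ‖∑ l : Fin n,
        a l * Complex.exp (Complex.I * (y l * ((((j : ℤ) + k - K) : ℤ) * Ω / K)))‖
        ≤ ‖a s‖ + R := by
      refine le_trans (norm_sum_le _ _) ?_
      rw [← hsum_a]
      refine Finset.sum_le_sum fun l _ => ?_
      rw [norm_mul, hEabs, mul_one]
    have h2 : ‖W ((j : ℤ) + k - K)‖ ≤ σ := le_of_lt (hW _ (hmK j k))
    rw [hAdef]; linarith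
  -- trace N upper bound
  have htrN : (Matrix.trace N).re = ∑ j, ∑ k, Complex.normSq (H k j) := by
    rw [hN, stmt8_frob]
  have htrN_nn : 0 ≤ (Matrix.trace N).re := by
    rw [htrN]
    exact Finset.sum_nonneg fun j _ => Finset.sum_nonneg fun k _ => Complex.normSq_nonneg _
  have htrN_le : (Matrix.trace N).re ≤ c ^ 2 * A ^ 2 := by
    rw [htrN]
    calc ∑ j, ∑ k, Complex.normSq (H k j) ≤ ∑ _j : Fin (K+1), ∑ _k : Fin (K+1), A ^ 2 := by
          refine Finset.sum_le_sum fun j _ => Finset.sum_le_sum fun k _ => ?_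
          rw [← Complex.sq_norm]
          exact pow_le_pow_left₀ (norm_nonneg _) (hentry k j) 2
      _ = c ^ 2 * A ^ 2 := by
          rw [Finset.sum_const, Finset.sum_const, Finset.card_univ, Fintype.card_fin,
            nsmul_eq_mul, nsmul_eq_mul, hcdef]
          push_cast; ring
  -- test vector
  set v : Fin (K + 1) → ℂ := fun k => Complex.exp (-(Complex.I * (y s * (((k : ℤ) : ℂ) * Ω / K)))) with hvdef
  have hvabs : ∀ k, ‖v k‖ = 1 := by
    intro k; simp only [hvdef]; exact hE'abs (y s) (k : ℤ)
  set u : Fin (K + 1) → ℂ := fun j => ∑ k, H j k * v k with hudef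
  -- lower bound on |u j|
  have hulow : ∀ j, c * B ≤ ‖u j‖ := by
    intro j
    set X : ℂ := ∑ k : Fin (K+1),
        a s * Complex.exp (Complex.I * (y s * (((((j : ℤ) + k - K) : ℤ) : ℂ) * Ω / K))) * v k with hXdef
    set Y : ℂ := ∑ k : Fin (K+1), ∑ l ∈ Finset.univ.erase s,
        a l * Complex.exp (Complex.I * (y l * (((((j : ℤ) + k - K) : ℤ) : ℂ) * Ω / K))) * v k with hYdef
    set Z : ℂ := ∑ k : Fin (K+1), W ((j : ℤ) + (k : ℤ) - K) * v k with hZdef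
    have hsplit : u j = X + (Y + Z) := by
      rw [hudef, hXdef, hYdef, hZdef]
      simp only
      rw [← Finset.sum_add_distrib, ← Finset.sum_add_distrib]
      refine Finset.sum_congr rfl fun k _ => ?_
      rw [hH, add_mul, Finset.sum_mul,
        ← Finset.add_sum_erase _
          (fun l => a l * Complex.exp (Complex.I * (y l * (((((j : ℤ) + k - K) : ℤ) : ℂ) * Ω / K))) * v k)
          (Finset.mem_univ s)]
      ring
    -- main term
    have hmain : ∀ k : Fin (K+1),
        a s * Complex.exp (Complex.I * (y s * (((((j : ℤ) + k - K) : ℤ) : ℂ) * Ω / K))) * v k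
        = a s * Complex.exp (Complex.I * (y s * (((((j : ℤ) - K) : ℤ) : ℂ) * Ω / K))) := by
      intro k
      simp only [hvdef]
      rw [mul_assoc, ← Complex.exp_add]
      congr 2
      push_cast
      ring
    have hmain_abs : ‖X‖ = c * ‖a s‖ := by
      rw [hXdef, Finset.sum_congr rfl fun k _ => hmain k, Finset.sum_const, Finset.card_univ,
        Fintype.card_fin, nsmul_eq_mul, norm_mul, norm_mul,
        Complex.norm_natCast, hEabs, mul_one, hcdef]
      push_cast; ring
    -- error terms
    have herr1 : ‖Y‖ ≤ c * R := by
      rw [hYdef]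
      refine le_trans (norm_sum_le _ _) ?_
      calc ∑ k : Fin (K+1), ‖∑ l ∈ Finset.univ.erase s,
            a l * Complex.exp (Complex.I * (y l * (((((j : ℤ) + k - K) : ℤ) : ℂ) * Ω / K))) * v k‖
          ≤ ∑ _k : Fin (K+1), R := by
            refine Finset.sum_le_sum fun k _ => ?_
            refine le_trans (norm_sum_le _ _) ?_
            rw [hRdef]
            refine Finset.sum_le_sum fun l _ => ?_
            rw [norm_mul, norm_mul, hEabs, hvabs, mul_one, mul_one]
        _ = c * R := by
            rw [Finset.sum_const, Finset.card_univ, Fintype.card_fin, nsmul_eq_mul, hcdef]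
            push_cast; ring
    have herr2 : ‖Z‖ ≤ c * σ := by
      rw [hZdef]
      refine le_trans (norm_sum_le _ _) ?_
      calc ∑ k : Fin (K+1), ‖W ((j : ℤ) + (k : ℤ) - K) * v k‖
          ≤ ∑ _k : Fin (K+1), σ := by
            refine Finset.sum_le_sum fun k _ => ?_
            rw [norm_mul, hvabs, mul_one]
            exact le_of_lt (hW _ (hmK j k))
        _ = c * σ := by
            rw [Finset.sum_const, Finset.card_univ, Fintype.card_fin, nsmul_eq_mul, hcdef]
            push_cast; ring
    -- combine
    have hYZ : ‖Y + Z‖ ≤ c * R + c * σ :=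
      le_trans (norm_add_le _ _) (by linarith)
    have htri : ‖X‖ - ‖Y + Z‖ ≤ ‖X + (Y + Z)‖ := by
      have h1 : X = (X + (Y + Z)) - (Y + Z) := by ring
      have h2 : ‖X‖ ≤ ‖X + (Y + Z)‖ + ‖Y + Z‖ := by
        conv_lhs => rw [h1]
        exact norm_sub_le _ _
      linarith
    rw [hsplit, hBdef]
    rw [hmain_abs] at htri
    have : c * (‖a s‖ - R - σ) = c * ‖a s‖ - (c * R + c * σ) := by ring
    rw [this]
    linarith
  -- ∑ normSq (u j) equals the quadratic form of N at v
  have hkey : ∑ j, (starRingEnd ℂ) (u j) * u j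
      = ∑ k, ∑ k', (starRingEnd ℂ) (v k) * N k k' * v k' := by
    calc ∑ j, (starRingEnd ℂ) (u j) * u j
        = ∑ j, ∑ k, ∑ k', (starRingEnd ℂ) (v k) * ((starRingEnd ℂ) (H j k) * H j k') * v k' := by
          refine Finset.sum_congr rfl fun j _ => ?_
          simp only [hudef]
          rw [map_sum, Finset.sum_mul_sum]
          exact Finset.sum_congr rfl fun k _ => Finset.sum_congr rfl fun k' _ => by
            rw [_root_.map_mul]; ring
      _ = ∑ k, ∑ k', (starRingEnd ℂ) (v k) * (∑ j, (starRingEnd ℂ) (H j k) * H j k') * v k' := by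
          rw [Finset.sum_comm]
          refine Finset.sum_congr rfl fun k _ => ?_
          rw [Finset.sum_comm]
          refine Finset.sum_congr rfl fun k' _ => ?_
          rw [Finset.mul_sum, Finset.sum_mul]
      _ = ∑ k, ∑ k', (starRingEnd ℂ) (v k) * N k k' * v k' := by
          subst hN
          refine Finset.sum_congr rfl fun k _ => Finset.sum_congr rfl fun k' _ => ?_
          simp [Matrix.mul_apply, Matrix.conjTranspose_apply]
  have husum : (↑(∑ j, Complex.normSq (u j)) : ℂ) = ∑ j, (starRingEnd ℂ) (u j) * u j := by
    push_cast
    exact Finset.sum_congr rfl fun j _ => by rw [mul_comm, Complex.mul_conj]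
  set S1 : ℝ := ∑ k, ∑ k', ‖N k k'‖ with hS1def
  have hS1ge : c ^ 3 * B ^ 2 ≤ S1 := by
    have h1 : c ^ 3 * B ^ 2 ≤ ∑ j, Complex.normSq (u j) := by
      calc c ^ 3 * B ^ 2 = ∑ _j : Fin (K+1), (c * B) ^ 2 := by
            rw [Finset.sum_const, Finset.card_univ, Fintype.card_fin, nsmul_eq_mul, hcdef]
            push_cast; ring
        _ ≤ ∑ j, Complex.normSq (u j) := by
            refine Finset.sum_le_sum fun j _ => ?_
            rw [← Complex.sq_norm]
            exact pow_le_pow_left₀ (by positivity) (hulow j) 2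
    have h2 : ∑ j, Complex.normSq (u j) ≤ S1 := by
      have hre : ∑ j, Complex.normSq (u j)
          = (∑ k, ∑ k', (starRingEnd ℂ) (v k) * N k k' * v k').re := by
        rw [← hkey, ← husum, Complex.ofReal_re]
      rw [hre]
      refine le_trans (Complex.re_le_norm _) ?_
      refine le_trans (norm_sum_le _ _) ?_
      rw [hS1def]
      refine Finset.sum_le_sum fun k _ => ?_
      refine le_trans (norm_sum_le _ _) ?_
      refine Finset.sum_le_sum fun k' _ => ?_
      rw [norm_mul, norm_mul, Complex.norm_conj, hvabs, hvabs, one_mul, mul_one]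
    linarith
  -- Cauchy-Schwarz on the entries of N
  have htrNN : (Matrix.trace (Nᴴ * N)).re = ∑ j, ∑ k, Complex.normSq (N k j) := stmt8_frob N
  have hCS : S1 ^ 2 ≤ c ^ 2 * ∑ j, ∑ k, Complex.normSq (N k j) := by
    have hcs := sq_sum_le_card_mul_sum_sq (s := (Finset.univ : Finset (Fin (K+1) × Fin (K+1))))
      (f := fun p => ‖N p.1 p.2‖)
    have e1 : ∑ p : Fin (K+1) × Fin (K+1), ‖N p.1 p.2‖ = S1 := by
      rw [hS1def, Fintype.sum_prod_type]
    have e2 : ∑ p : Fin (K+1) × Fin (K+1), ‖N p.1 p.2‖ ^ 2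
        = ∑ j, ∑ k, Complex.normSq (N k j) := by
      rw [Fintype.sum_prod_type, Finset.sum_comm]
      exact Finset.sum_congr rfl fun j _ => Finset.sum_congr rfl fun k _ => Complex.sq_norm _
    have e3 : ((Finset.univ : Finset (Fin (K+1) × Fin (K+1))).card : ℝ) = c ^ 2 := by
      rw [Finset.card_univ, Fintype.card_prod, Fintype.card_fin, hcdef]
      push_cast; ring
    rw [e1, e2, e3] at hcs
    exact hcs
  -- conclude
  have htrNN_ge : c ^ 4 * B ^ 4 ≤ (Matrix.trace (Nᴴ * N)).re := by
    rw [htrNN]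
    have hb2 : (0:ℝ) ≤ c ^ 3 * B ^ 2 := by positivity
    have h3 : (c ^ 3 * B ^ 2) ^ 2 ≤ S1 ^ 2 := pow_le_pow_left₀ hb2 hS1ge 2
    nlinarith [mul_pos hc hc, h3, hCS]
  have final : ∀ x t : ℝ, 0 ≤ x → x ≤ c ^ 2 * A ^ 2 → c ^ 4 * B ^ 4 ≤ t →
      x ^ 2 / t ≤ (A / B) ^ 4 := by
    intro x t hx hxle htge
    have hc4 : (0:ℝ) < c ^ 4 := pow_pos hc 4
    have hB4 : (0:ℝ) < B ^ 4 := pow_pos hB 4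
    have ht0 : (0:ℝ) < c ^ 4 * B ^ 4 := mul_pos hc4 hB4
    have h1 : x ^ 2 / t ≤ (c ^ 2 * A ^ 2) ^ 2 / (c ^ 4 * B ^ 4) :=
      div_le_div₀ (sq_nonneg _) (pow_le_pow_left₀ hx hxle 2) ht0 htge
    refine le_trans h1 (le_of_eq ?_)
    rw [show (c ^ 2 * A ^ 2) ^ 2 = c ^ 4 * A ^ 4 by ring,
      mul_div_mul_left _ _ (ne_of_gt hc4), div_pow]
  exact final _ _ htrN_nn htrN_le htrNN_ge
end

section
/- Let n ≥ 2 be an even integer, M > σ' > 0, and Ω > 0. Let y_1,…,y_n ∈ [-π/(2Ω), π/(2Ω)] with minimum separation τ = min_{p≠q}|y_p - y_q| ≥ (3.03 π e/Ω)(σ'/M)^{1/n}. If there exist complex numbers â_1,…,â_n and a point y ∈ [-π/(2Ω), π/(2Ω)] with min_j |y - y_j| ≥ τ/2 such that |∑_j â_j e^{iy_j ω} - M e^{iyω}| < σ' for all ω ∈ {mΩ/K : m = -K,…,K}, then a contradiction follows; equivalently, any such σ'-admissible approximation forces min_j |y - y_j| < τ/2. -/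
open Real Complex Finset



lemma expand_prod {n : ℕ} (z : Fin n → ℂ) (x : ℂ) :
    ∑ S ∈ (univ : Finset (Fin n)).powerset, (∏ j ∈ univ \ S, (-z j)) * x ^ S.card
      = ∏ j, (x - z j) := by
  have := Finset.prod_add (fun _ : Fin n => x) (fun j => -z j) univ
  simp only [sub_eq_add_neg]
  rw [this]
  refine Finset.sum_congr rfl fun S hS => ?_
  rw [Finset.prod_const]
  ring

lemma expand_prod_zpow {n : ℕ} (z : Fin n → ℂ) (x : ℂ) (hx : x ≠ 0) (s : ℤ) :
    ∑ S ∈ (univ : Finset (Fin n)).powerset, (∏ j ∈ univ \ S, (-z j)) * x ^ ((S.card : ℤ) - s)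
      = x ^ (-s) * ∏ j, (x - z j) := by
  rw [← expand_prod z x, Finset.mul_sum]
  refine Finset.sum_congr rfl fun S hS => ?_
  rw [sub_eq_add_neg, zpow_add₀ hx, zpow_natCast]
  ring

lemma Tsum_eq {n : ℕ} (z : Fin n → ℂ) (hz : ∀ j, z j ≠ 0) (w : ℂ) (hw : w ≠ 0)
    (a : Fin n → ℂ) (Mc : ℂ) (s : ℤ) :
    (∑ S ∈ (univ : Finset (Fin n)).powerset, (∏ j ∈ univ \ S, (-z j)) *
        ((∑ j, a j * z j ^ ((S.card:ℤ) - s)) - Mc * w ^ ((S.card:ℤ) - s)))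
      = -(Mc * (w ^ (-s) * ∏ j, (w - z j))) := by
  have h1 : ∀ S ∈ (univ : Finset (Fin n)).powerset,
      (∏ j ∈ univ \ S, (-z j)) * ((∑ j, a j * z j ^ ((S.card:ℤ) - s)) - Mc * w ^ ((S.card:ℤ) - s))
      = (∑ j, a j * ((∏ i ∈ univ \ S, (-z i)) * z j ^ ((S.card:ℤ) - s)))
        - Mc * ((∏ i ∈ univ \ S, (-z i)) * w ^ ((S.card:ℤ) - s)) := by
    intro S _
    rw [mul_sub, Finset.mul_sum]
    congr 1
    · exact Finset.sum_congr rfl fun j _ => by ring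
    · ring
  rw [Finset.sum_congr rfl h1, Finset.sum_sub_distrib, Finset.sum_comm]
  have h2 : ∀ j : Fin n, (∑ S ∈ (univ : Finset (Fin n)).powerset,
      a j * ((∏ i ∈ univ \ S, (-z i)) * z j ^ ((S.card:ℤ) - s))) = 0 := by
    intro j
    rw [← Finset.mul_sum, expand_prod_zpow z (z j) (hz j) s,
      Finset.prod_eq_zero (Finset.mem_univ j) (sub_self (z j))]
    ring
  rw [Finset.sum_congr rfl (fun j _ => h2 j), Finset.sum_const_zero]
  rw [← Finset.mul_sum, expand_prod_zpow z w hw s]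
  ring

lemma abs_exp_sub_exp (a b : ℝ) :
    ‖Complex.exp (Complex.I*a) - Complex.exp (Complex.I*b)‖ = 2 * |Real.sin ((a-b)/2)| := by
  have h1 : Complex.exp (Complex.I*a) - Complex.exp (Complex.I*b)
      = Complex.exp (Complex.I*((a+b)/2)) *
        (Complex.exp ((((a-b)/2 : ℝ) : ℂ) * Complex.I) - Complex.exp ((((-((a-b)/2)) : ℝ) : ℂ) * Complex.I)) := by
    rw [mul_sub, ← Complex.exp_add, ← Complex.exp_add]
    push_cast
    ring_nf
  rw [h1, norm_mul]
  have h2 : ‖Complex.exp (Complex.I*((a+b)/2))‖ = 1 := by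
    rw [mul_comm]
    exact_mod_cast Complex.norm_exp_ofReal_mul_I ((a+b)/2)
  rw [h2, one_mul, Complex.exp_mul_I, Complex.exp_mul_I]
  push_cast
  rw [Complex.cos_neg, Complex.sin_neg]
  have : (Complex.cos ((a-b)/2) + Complex.sin ((a-b)/2) * Complex.I)
      - (Complex.cos ((a-b)/2) + -Complex.sin ((a-b)/2) * Complex.I)
      = 2 * Complex.sin ((a-b)/2) * Complex.I := by ring
  rw [this]
  rw [norm_mul, norm_mul, Complex.norm_I, Complex.norm_two, mul_one]
  congr 1
  rw [show ((a:ℂ)-b)/2 = (((a-b)/2 : ℝ) : ℂ) by push_cast; ring]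
  rw [← Complex.ofReal_sin, Complex.norm_real, Real.norm_eq_abs]

lemma habs_sin (t : ℝ) (ht : |t| ≤ π/2) : 2/π * |t| ≤ |Real.sin t| := by
  have h1 : 2/π * |t| ≤ Real.sin |t| := Real.mul_le_sin (abs_nonneg t) ht
  have hnn : 0 ≤ Real.sin |t| := le_trans (by positivity) h1
  have h2 : |Real.sin t| = Real.sin |t| := by
    rcases le_or_gt 0 t with h | h
    · rw [_root_.abs_of_nonneg h] at *
      rw [_root_.abs_of_nonneg hnn]
    · rw [_root_.abs_of_neg h] at *
      rw [Real.sin_neg] at hnn ⊢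
      rw [show |Real.sin t| = |-Real.sin t| by rw [abs_neg], _root_.abs_of_nonneg hnn]
  linarith

def oddprod (s : ℕ) : ℕ := ∏ k ∈ Finset.range s, (2*k+1)
lemma oddprod_succ (s : ℕ) : oddprod (s+1) = oddprod s * (2*s+1) := Finset.prod_range_succ _ s
lemma oddprod_pos (s : ℕ) : 0 < oddprod s := Finset.prod_pos (fun k _ => by omega)


lemma bal : ∀ (d s u : ℕ), s + d = u → oddprod u * oddprod u ≤ oddprod s * oddprod (u + d) := by
  intro d
  induction d with
  | zero => intro s u h; subst h; simp
  | succ d ih =>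
    intro s u h
    have h1 : (s+1) + d = u := by omega
    have := ih (s+1) u h1
    calc oddprod u * oddprod u ≤ oddprod (s+1) * oddprod (u + d) := this
    _ = oddprod s * (2*s+1) * oddprod (u+d) := by rw [oddprod_succ]
    _ ≤ oddprod s * (2*(u+d)+1) * oddprod (u+d) := by
        have : 2*s+1 ≤ 2*(u+d)+1 := by omega
        exact Nat.mul_le_mul_right _ (Nat.mul_le_mul_left _ this)
    _ = oddprod s * (oddprod (u+d) * (2*(u+d)+1)) := by ring
    _ = oddprod s * oddprod (u + (d+1)) := by rw [← oddprod_succ]; ring_nf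

lemma sep_max' (τ c : ℝ) (hτ : 0 ≤ τ) :
    ∀ (N : ℕ) (A : Finset ℝ) (hA : A.Nonempty), A.card = N →
    (∀ a ∈ A, c ≤ a) → (∀ a ∈ A, ∀ b ∈ A, a ≠ b → τ ≤ |a - b|) →
    c + ((N : ℝ) - 1) * τ ≤ A.max' hA := by
  intro N
  induction N with
  | zero => intro A hA hcard; simp [Finset.card_eq_zero] at hcard; subst hcard; exact absurd hA (by simp)
  | succ N ih =>
    intro A hA hcard hc hsep
    rcases Nat.eq_zero_or_pos N with hN | hN
    · subst hN
      have := hc _ (A.max'_mem hA)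
      push_cast
      linarith
    · set m := A.max' hA with hm
      have hBne : (A.erase m).Nonempty := by
        rw [← Finset.card_pos, Finset.card_erase_of_mem (A.max'_mem hA), hcard]; omega
      have hBcard : (A.erase m).card = N := by
        rw [Finset.card_erase_of_mem (A.max'_mem hA), hcard]; omega
      have hIH := ih (A.erase m) hBne hBcard
        (fun a ha => hc a (Finset.mem_of_mem_erase ha))
        (fun a ha b hb hab => hsep a (Finset.mem_of_mem_erase ha) b (Finset.mem_of_mem_erase hb) hab)
      set m' := (A.erase m).max' hBne with hm'
      have hm'A : m' ∈ A.erase m := (A.erase m).max'_mem hBne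
      have hm'ne : m' ≠ m := Finset.ne_of_mem_erase hm'A
      have hm'le : m' ≤ m := A.le_max' m' (Finset.mem_of_mem_erase hm'A)
      have hsep' : τ ≤ |m - m'| := hsep m (A.max'_mem hA) m' (Finset.mem_of_mem_erase hm'A) (Ne.symm hm'ne)
      rw [_root_.abs_of_nonneg (by linarith : (0:ℝ) ≤ m - m')] at hsep'
      push_cast
      linarith

lemma sep_prod (τ : ℝ) (hτ : 0 < τ) :
    ∀ (N : ℕ) (A : Finset ℝ), A.card = N →
    (∀ a ∈ A, τ/2 ≤ a) → (∀ a ∈ A, ∀ b ∈ A, a ≠ b → τ ≤ |a - b|) →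
    (oddprod N : ℝ) * (τ/2)^N ≤ ∏ a ∈ A, a := by
  intro N
  induction N with
  | zero => intro A hcard _ _; simp [Finset.card_eq_zero] at hcard; subst hcard; simp [oddprod]
  | succ N ih =>
    intro A hcard hc hsep
    have hA : A.Nonempty := by rw [← Finset.card_pos, hcard]; omega
    set m := A.max' hA with hm
    have hmax := sep_max' τ (τ/2) (le_of_lt hτ) (N+1) A hA hcard hc hsep
    have hBcard : (A.erase m).card = N := by
      rw [Finset.card_erase_of_mem (A.max'_mem hA), hcard]; omega
    have hIH := ih (A.erase m) hBcard
      (fun a ha => hc a (Finset.mem_of_mem_erase ha))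
      (fun a ha b hb hab => hsep a (Finset.mem_of_mem_erase ha) b (Finset.mem_of_mem_erase hb) hab)
    have hprod : ∏ a ∈ A, a = m * ∏ a ∈ A.erase m, a :=
      (Finset.mul_prod_erase A _ (A.max'_mem hA)).symm
    have hmge : (2*(N:ℝ)+1) * (τ/2) ≤ m := by
      push_cast at hmax ⊢; linarith
    have hponneg : (0:ℝ) ≤ (oddprod N : ℝ) * (τ/2)^N := by positivity
    have : (oddprod (N+1) : ℝ) * (τ/2)^(N+1) = ((2*(N:ℝ)+1) * (τ/2)) * ((oddprod N : ℝ) * (τ/2)^N) := by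
      rw [oddprod_succ]; push_cast; ring
    rw [this, hprod]
    exact mul_le_mul hmge hIH hponneg (le_trans (by positivity) hmge)

lemma ratio_pow_le (s : ℕ) : ((2*(s:ℝ)+3)/(2*s+1))^s ≤ Real.exp 1 := by
  have h1 : (0:ℝ) < 2*s+1 := by positivity
  have h2 : (2*(s:ℝ)+3)/(2*s+1) = 1 + 2/(2*s+1) := by field_simp; ring
  have h3 : (1 + 2/(2*(s:ℝ)+1)) ≤ Real.exp (2/(2*s+1)) := by
    have := Real.add_one_le_exp (2/(2*(s:ℝ)+1)); linarith
  calc ((2*(s:ℝ)+3)/(2*s+1))^s ≤ (Real.exp (2/(2*s+1)))^s := by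
        rw [h2]; exact pow_le_pow_left₀ (by positivity) h3 s
    _ = Real.exp (s * (2/(2*s+1))) := (Real.exp_nat_mul _ s).symm
    _ ≤ Real.exp 1 := by
        apply Real.exp_le_exp.2
        have h4 : (s:ℝ) * (2/(2*s+1)) = 2*s/(2*s+1) := by ring
        rw [h4, div_le_one h1]
        linarith

lemma keyQ : ∀ s : ℕ, 1 ≤ s → ((2*(2*(s:ℝ)+1)))^s ≤ (3.03 * Real.exp 1)^s * oddprod s := by
  have he : (2.7182818283 : ℝ) < Real.exp 1 := Real.exp_one_gt_d9
  have he' : Real.exp 1 ≤ 2.7182818286 := le_of_lt Real.exp_one_lt_d9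
  intro s
  induction s with
  | zero => intro h; omega
  | succ s ih =>
    intro _
    rcases Nat.eq_zero_or_pos s with hs | hs
    · subst hs
      norm_num [oddprod]
      nlinarith
    rcases Nat.lt_or_ge s 2 with hs2 | hs2
    · interval_cases s
      norm_num [oddprod, Finset.prod_range_succ]
      nlinarith [Real.exp_pos 1]
    · -- step for s ≥ 2
      have hihs := ih hs
      have hstep : (2*(2*((s:ℝ)+1)+1))^(s+1) ≤ (3.03 * Real.exp 1) * (2*(s:ℝ)+1) * (2*(2*(s:ℝ)+1))^s := by
        have hr := ratio_pow_le s
        have h1 : (0:ℝ) < 2*(s:ℝ)+1 := by positivity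
        have hA : (2*(2*((s:ℝ)+1)+1))^s = (2*(2*(s:ℝ)+1))^s * ((2*(s:ℝ)+3)/(2*s+1))^s := by
          rw [← mul_pow]; congr 1; field_simp; ring
        have hs2' : (2:ℝ) ≤ s := by exact_mod_cast hs2
        calc (2*(2*((s:ℝ)+1)+1))^(s+1) = (2*(2*(s:ℝ)+3)) * (2*(2*((s:ℝ)+1)+1))^s := by
              rw [pow_succ]; ring_nf
          _ = (2*(2*(s:ℝ)+3)) * ((2*(2*(s:ℝ)+1))^s * ((2*(s:ℝ)+3)/(2*s+1))^s) := by rw [hA]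
          _ ≤ (2*(2*(s:ℝ)+3)) * ((2*(2*(s:ℝ)+1))^s * Real.exp 1) := by gcongr
          _ = (2*(2*(s:ℝ)+3) * Real.exp 1) * (2*(2*(s:ℝ)+1))^s := by ring
          _ ≤ (3.03 * Real.exp 1 * (2*(s:ℝ)+1)) * (2*(2*(s:ℝ)+1))^s := by
              have hp : (0:ℝ) ≤ (2*(2*(s:ℝ)+1))^s := by positivity
              have hc : 2*(2*(s:ℝ)+3) * Real.exp 1 ≤ 3.03 * Real.exp 1 * (2*(s:ℝ)+1) := by
                nlinarith [Real.exp_pos 1]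
              exact mul_le_mul_of_nonneg_right hc hp
          _ = (3.03 * Real.exp 1) * (2*(s:ℝ)+1) * (2*(2*(s:ℝ)+1))^s := by ring
      calc (2*(2*((s+1 : ℕ):ℝ)+1))^(s+1) = (2*(2*((s:ℝ)+1)+1))^(s+1) := by push_cast; ring
        _ ≤ (3.03 * Real.exp 1) * (2*(s:ℝ)+1) * (2*(2*(s:ℝ)+1))^s := hstep
        _ ≤ (3.03 * Real.exp 1) * (2*(s:ℝ)+1) * ((3.03 * Real.exp 1)^s * oddprod s) := by
            have : (0:ℝ) ≤ (3.03 * Real.exp 1) * (2*(s:ℝ)+1) := by positivity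
            exact mul_le_mul_of_nonneg_left hihs this
        _ = (3.03 * Real.exp 1)^(s+1) * ((oddprod s : ℝ) * (2*(s:ℝ)+1)) := by ring
        _ = (3.03 * Real.exp 1)^(s+1) * oddprod (s+1) := by
            rw [oddprod_succ]; push_cast; ring

set_option maxHeartbeats 2000000 in
theorem stmt_12 (n : ℕ) (hn : 2 ≤ n) (hneven : Even n)
    (M σ' Ω : ℝ) (hσ' : 0 < σ') (hσ'M : σ' < M) (hΩ : 0 < Ω)
    (K : ℕ) (hK : n ≤ K)
    (y : Fin n → ℝ) (hy : ∀ j, y j ∈ Set.Icc (-(π / (2 * Ω))) (π / (2 * Ω)))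
    (τ : ℝ) (hτleast : IsLeast {r : ℝ | ∃ p q : Fin n, p ≠ q ∧ r = |y p - y q|} τ)
    (hτ : 3.03 * π * Real.exp 1 / Ω * (σ' / M) ^ ((1 : ℝ) / n) ≤ τ)
    (ahat : Fin n → ℂ) (y0 : ℝ) (hy0 : y0 ∈ Set.Icc (-(π / (2 * Ω))) (π / (2 * Ω)))
    (hadm : ∀ m : ℤ, |m| ≤ (K : ℤ) →
      ‖(∑ j : Fin n, ahat j * Complex.exp (Complex.I * (y j * (m * Ω / K))))
        - M * Complex.exp (Complex.I * (y0 * (m * Ω / K)))‖ < σ') :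
    ∃ j : Fin n, |y0 - y j| < τ / 2 := by
  by_contra hcon
  push_neg at hcon
  -- basic positivity
  have hM : 0 < M := lt_trans hσ' hσ'M
  have hπ : 0 < π := Real.pi_pos
  have hx : (0:ℝ) < (σ' / M) ^ ((1 : ℝ) / n) := Real.rpow_pos_of_pos (by positivity) _
  have hτpos : 0 < τ := lt_of_lt_of_le (by positivity) hτ
  have hsep : ∀ p q : Fin n, p ≠ q → τ ≤ |y p - y q| := by
    intro p q hpq
    exact hτleast.2 ⟨p, q, hpq, rfl⟩
  -- integers
  obtain ⟨s, hs⟩ := hneven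
  have hs2 : n = 2 * s := by omega
  have hs1 : 1 ≤ s := by omega
  have hK0 : 0 < K := by omega
  set r : ℕ := (2*K+1)/(n+1) with hrdef
  have e1 : (n+1) * r + (2*K+1) % (n+1) = 2*K+1 := Nat.div_add_mod _ _
  have e2 : (2*K+1) % (n+1) < n+1 := Nat.mod_lt _ (by omega)
  have hr1 : K + 1 ≤ (n+1) * r := by omega
  have hr0 : 1 ≤ r := by by_contra hr; push_neg at hr; interval_cases r <;> omega
  have e3 : (n+1) * r = n*r + r := by ring
  have hrn : r * n ≤ 2 * K := by rw [mul_comm]; omega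
  have e4 : r * n = 2 * (r * s) := by rw [hs2]; ring
  have hrs : r * s ≤ K := by omega
  have e5 : r * 2 ≤ r * n := Nat.mul_le_mul_left r hn
  have hrK : r ≤ K := by omega
  -- real spacing
  set h : ℝ := (r:ℝ) * Ω / K with hhdef
  have hK0' : (0:ℝ) < K := by exact_mod_cast hK0
  have hhpos : 0 < h := by rw [hhdef]; positivity
  have hr1' : (K:ℝ) + 1 ≤ ((n:ℝ)+1) * r := by exact_mod_cast hr1
  have hrK' : (r:ℝ) ≤ K := by exact_mod_cast hrK
  have hhlb : Ω / ((n:ℝ)+1) ≤ h := by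
    rw [hhdef, div_le_div_iff₀ (by positivity) hK0']
    nlinarith
  have hhub : h ≤ Ω := by
    rw [hhdef, div_le_iff₀ hK0']
    nlinarith
  set z : Fin n → ℂ := fun j => Complex.exp (Complex.I * ((y j * h : ℝ) : ℂ)) with hzdef
  set w : ℂ := Complex.exp (Complex.I * ((y0 * h : ℝ) : ℂ)) with hwdef
  have habs1 : ∀ θ : ℝ, ‖Complex.exp (Complex.I * (θ:ℂ))‖ = 1 := fun θ => by
    rw [mul_comm]; exact_mod_cast Complex.norm_exp_ofReal_mul_I θ
  have hzne : ∀ j, z j ≠ 0 := fun j => Complex.exp_ne_zero _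
  have hwne : w ≠ 0 := Complex.exp_ne_zero _
  have habsz : ∀ j, ‖z j‖ = 1 := fun j => habs1 _
  have habsw : ‖w‖ = 1 := habs1 _
  -- the data bound at subsampled frequencies
  have hE : ∀ k : ℤ, |k| ≤ (s:ℤ) →
      ‖(∑ j, ahat j * z j ^ k) - (M:ℂ) * w ^ k‖ < σ' := by
    intro k hk
    have hm : |(r:ℤ) * k| ≤ (K:ℤ) := by
      rw [abs_mul, _root_.abs_of_nonneg (by positivity : (0:ℤ) ≤ (r:ℤ))]
      calc (r:ℤ) * |k| ≤ (r:ℤ) * s := mul_le_mul_of_nonneg_left hk (by positivity)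
        _ ≤ K := by exact_mod_cast hrs
    have hH := hadm ((r:ℤ)*k) hm
    have hexp : ∀ θ : ℝ, Complex.exp (Complex.I * ((θ * h : ℝ) : ℂ)) ^ k
        = Complex.exp (Complex.I * ((θ:ℂ) * ((((r:ℤ)*k : ℤ):ℂ) * Ω / K))) := by
      intro θ
      rw [← Complex.exp_int_mul]
      congr 1
      rw [hhdef]
      push_cast
      ring
    have h1 : (∑ j, ahat j * z j ^ k) - (M:ℂ) * w ^ k
        = (∑ j, ahat j * Complex.exp (Complex.I * ((y j :ℂ) * ((((r:ℤ)*k : ℤ):ℂ) * Ω / K))))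
          - (M:ℂ) * Complex.exp (Complex.I * ((y0:ℂ) * ((((r:ℤ)*k:ℤ):ℂ) * Ω / K))) := by
      rw [hzdef, hwdef]
      congr 1
      · exact Finset.sum_congr rfl fun j _ => by rw [hexp (y j)]
      · rw [hexp y0]
    rw [h1]
    exact_mod_cast hH
  -- the key sum T
  set T : ℂ := ∑ S ∈ (univ : Finset (Fin n)).powerset, (∏ j ∈ univ \ S, (-z j)) *
      ((∑ j, ahat j * z j ^ ((S.card:ℤ) - (s:ℤ))) - (M:ℂ) * w ^ ((S.card:ℤ) - (s:ℤ))) with hTdef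
  have hTeq : T = -((M:ℂ) * (w ^ (-(s:ℤ)) * ∏ j, (w - z j))) :=
    Tsum_eq z hzne w hwne ahat (M:ℂ) (s:ℤ)
  have hTub : ‖T‖ < 2^n * σ' := by
    calc ‖T‖ ≤ ∑ S ∈ (univ : Finset (Fin n)).powerset,
        ‖(∏ j ∈ univ \ S, (-z j)) *
          ((∑ j, ahat j * z j ^ ((S.card:ℤ) - (s:ℤ))) - (M:ℂ) * w ^ ((S.card:ℤ) - (s:ℤ)))‖ :=
        norm_sum_le _ _
      _ < ∑ S ∈ (univ : Finset (Fin n)).powerset, σ' := by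
          apply Finset.sum_lt_sum_of_nonempty ⟨∅, Finset.empty_mem_powerset _⟩
          intro S hS
          have hcard : S.card ≤ n := by
            have := Finset.card_le_card (Finset.mem_powerset.mp hS)
            simpa using this
          have hk : |(S.card:ℤ) - (s:ℤ)| ≤ (s:ℤ) := by
            rw [abs_le]; omega
          have habsprod : ‖∏ j ∈ univ \ S, (-z j)‖ = 1 := by
            rw [norm_prod]
            apply Finset.prod_eq_one
            intro j _
            rw [norm_neg]
            exact habsz j
          rw [norm_mul, habsprod, one_mul]
          exact hE _ hk
      _ = 2^n * σ' := by
          rw [Finset.sum_const, Finset.card_powerset, Finset.card_univ, Fintype.card_fin,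
            nsmul_eq_mul]
          push_cast
          ring
  have hTlb : ‖T‖ = M * ∏ j, ‖w - z j‖ := by
    rw [hTeq, norm_neg, norm_mul, norm_mul, norm_zpow, habsw, one_zpow, one_mul,
      Complex.norm_real, Real.norm_eq_abs, _root_.abs_of_pos hM, norm_prod]
  -- per-factor lower bound
  have hyyb : ∀ a b : ℝ, a ∈ Set.Icc (-(π / (2 * Ω))) (π / (2 * Ω)) →
      b ∈ Set.Icc (-(π / (2 * Ω))) (π / (2 * Ω)) → |a - b| ≤ π/Ω := by
    intro a b ⟨ha1, ha2⟩ ⟨hb1, hb2⟩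
    have hsum : π / (2*Ω) + π / (2*Ω) = π/Ω := by field_simp; ring
    rw [abs_le]
    constructor <;> linarith
  have hfac : ∀ j, 2/π * (h * |y0 - y j|) ≤ ‖w - z j‖ := by
    intro j
    rw [hwdef, hzdef]
    rw [abs_exp_sub_exp (y0*h) (y j*h)]
    have habst : |(y0*h - y j*h)/2| = |y0 - y j| * h / 2 := by
      rw [show (y0*h - y j*h)/2 = (y0 - y j)*(h/2) by ring, abs_mul,
        _root_.abs_of_nonneg (by positivity : (0:ℝ) ≤ h/2)]
      ring
    have ht : |(y0*h - y j*h)/2| ≤ π/2 := by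
      rw [habst]
      have h1 : |y0 - y j| ≤ π/Ω := hyyb y0 (y j) hy0 (hy j)
      have h2 : |y0 - y j| * h ≤ (π/Ω) * Ω :=
        mul_le_mul h1 hhub (le_of_lt hhpos) (by positivity)
      rw [div_mul_cancel₀ _ (ne_of_gt hΩ)] at h2
      linarith
    have hsin := habs_sin _ ht
    rw [habst] at hsin
    linarith
  -- two-sided product bound
  have hside : (oddprod s : ℝ) * (oddprod s : ℝ) * (τ/2)^n ≤ ∏ j, |y0 - y j| := by
    classical
    set P := univ.filter (fun j : Fin n => y0 < y j) with hP
    set Q := univ.filter (fun j : Fin n => ¬ y0 < y j) with hQ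
    have hcardPQ : P.card + Q.card = n := by
      rw [hP, hQ, Finset.card_filter_add_card_filter_not]
      simp
    have hne : ∀ j : Fin n, y j ≠ y0 := by
      intro j hj
      have := hcon j
      rw [hj] at this
      simp at this
      linarith
    -- positive side
    have hsideP : (oddprod P.card : ℝ) * (τ/2)^P.card ≤ ∏ j ∈ P, |y0 - y j| := by
      have hinj : ∀ x ∈ P, ∀ x' ∈ P, y x - y0 = y x' - y0 → x = x' := by
        intro x _ x' _ hxx'
        by_contra hne'
        have h0 := hsep x x' hne'
        have heq : y x = y x' := by linarith
        rw [heq] at h0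
        simp at h0
        linarith
      have hcardA : (P.image (fun j => y j - y0)).card = P.card :=
        Finset.card_image_of_injOn hinj
      have hlem := sep_prod τ hτpos P.card (P.image (fun j => y j - y0)) hcardA ?_ ?_
      · calc (oddprod P.card : ℝ) * (τ/2)^P.card
            ≤ ∏ a ∈ P.image (fun j => y j - y0), a := hlem
          _ = ∏ j ∈ P, (y j - y0) := Finset.prod_image hinj
          _ = ∏ j ∈ P, |y0 - y j| := by
              refine Finset.prod_congr rfl fun j hj => ?_
              rw [hP, Finset.mem_filter] at hj
              rw [abs_sub_comm, _root_.abs_of_pos (by linarith [hj.2] : (0:ℝ) < y j - y0)]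
      · intro a ha
        obtain ⟨j, hj, rfl⟩ := Finset.mem_image.mp ha
        rw [hP, Finset.mem_filter] at hj
        have := hcon j
        rw [abs_sub_comm, _root_.abs_of_pos (by linarith [hj.2] : (0:ℝ) < y j - y0)] at this
        exact this
      · intro a ha b hb hab
        obtain ⟨j, hj, rfl⟩ := Finset.mem_image.mp ha
        obtain ⟨i, hi, rfl⟩ := Finset.mem_image.mp hb
        have hij : j ≠ i := fun hji => hab (by rw [hji])
        have := hsep j i hij
        calc τ ≤ |y j - y i| := this
          _ = |(y j - y0) - (y i - y0)| := by ring_nf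
    -- negative side
    have hsideQ : (oddprod Q.card : ℝ) * (τ/2)^Q.card ≤ ∏ j ∈ Q, |y0 - y j| := by
      have hinj : ∀ x ∈ Q, ∀ x' ∈ Q, y0 - y x = y0 - y x' → x = x' := by
        intro x _ x' _ hxx'
        by_contra hne'
        have h0 := hsep x x' hne'
        have heq : y x = y x' := by linarith
        rw [heq] at h0
        simp at h0
        linarith
      have hcardA : (Q.image (fun j => y0 - y j)).card = Q.card :=
        Finset.card_image_of_injOn hinj
      have hlem := sep_prod τ hτpos Q.card (Q.image (fun j => y0 - y j)) hcardA ?_ ?_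
      · calc (oddprod Q.card : ℝ) * (τ/2)^Q.card
            ≤ ∏ a ∈ Q.image (fun j => y0 - y j), a := hlem
          _ = ∏ j ∈ Q, (y0 - y j) := Finset.prod_image hinj
          _ = ∏ j ∈ Q, |y0 - y j| := by
              refine Finset.prod_congr rfl fun j hj => ?_
              rw [hQ, Finset.mem_filter] at hj
              have hlt : y j < y0 := lt_of_le_of_ne (not_lt.mp hj.2) (hne j)
              rw [_root_.abs_of_pos (by linarith : (0:ℝ) < y0 - y j)]
      · intro a ha
        obtain ⟨j, hj, rfl⟩ := Finset.mem_image.mp ha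
        rw [hQ, Finset.mem_filter] at hj
        have hlt : y j < y0 := lt_of_le_of_ne (not_lt.mp hj.2) (hne j)
        have := hcon j
        rw [_root_.abs_of_pos (by linarith : (0:ℝ) < y0 - y j)] at this
        exact this
      · intro a ha b hb hab
        obtain ⟨j, hj, rfl⟩ := Finset.mem_image.mp ha
        obtain ⟨i, hi, rfl⟩ := Finset.mem_image.mp hb
        have hij : j ≠ i := fun hji => hab (by rw [hji])
        calc τ ≤ |y j - y i| := hsep j i hij
          _ = |(y0 - y j) - (y0 - y i)| := by rw [show (y0 - y j) - (y0 - y i) = -(y j - y i) by ring, abs_neg]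
    -- balance
    have hbal : oddprod s * oddprod s ≤ oddprod P.card * oddprod Q.card := by
      rcases le_total P.card Q.card with hle | hle
      · have hd : P.card + (s - P.card) = s := by omega
        have := bal (s - P.card) P.card s hd
        have hq : s + (s - P.card) = Q.card := by omega
        rwa [hq] at this
      · have hd : Q.card + (s - Q.card) = s := by omega
        have := bal (s - Q.card) Q.card s hd
        have hq : s + (s - Q.card) = P.card := by omega
        rw [hq] at this
        linarith [this]
    have hsplit : ∏ j, |y0 - y j| = (∏ j ∈ P, |y0 - y j|) * ∏ j ∈ Q, |y0 - y j| :=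
      (Finset.prod_filter_mul_prod_filter_not univ (fun j => y0 < y j) _).symm
    have hbal' : (oddprod s : ℝ) * (oddprod s : ℝ) ≤ (oddprod P.card : ℝ) * (oddprod Q.card : ℝ) := by
      exact_mod_cast hbal
    calc (oddprod s : ℝ) * (oddprod s : ℝ) * (τ/2)^n
        ≤ (oddprod P.card : ℝ) * (oddprod Q.card : ℝ) * (τ/2)^n := by
          apply mul_le_mul_of_nonneg_right hbal' (by positivity)
      _ = ((oddprod P.card : ℝ) * (τ/2)^P.card) * ((oddprod Q.card : ℝ) * (τ/2)^Q.card) := by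
          have hpow : (τ/2)^n = (τ/2)^P.card * (τ/2)^Q.card := by
            rw [← pow_add, hcardPQ]
          rw [hpow]
          ring
      _ ≤ (∏ j ∈ P, |y0 - y j|) * ∏ j ∈ Q, |y0 - y j| := by
          apply mul_le_mul hsideP hsideQ (by positivity) (le_trans (by positivity) hsideP)
      _ = ∏ j, |y0 - y j| := hsplit.symm
  -- final numeric chain
  set C : ℝ := (oddprod s : ℝ) with hCdef
  have hC0 : 0 < C := by rw [hCdef]; exact_mod_cast oddprod_pos s
  set A : ℝ := 3.03 * Real.exp 1 with hAdef
  have hA0 : 0 < A := by rw [hAdef]; positivity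
  set x : ℝ := (σ' / M) ^ ((1 : ℝ) / n) with hxdef
  have hn1 : ((n:ℝ)+1) = 2*(s:ℝ)+1 := by rw [hs2]; push_cast; ring
  have hn1pos : (0:ℝ) < (n:ℝ)+1 := by positivity
  have hQ1 : (2*((n:ℝ)+1))^s ≤ A^s * C := by rw [hn1, hAdef, hCdef]; exact keyQ s hs1
  have hQ2 : (2*((n:ℝ)+1))^n ≤ A^n * C^2 := by
    calc (2*((n:ℝ)+1))^n = ((2*((n:ℝ)+1))^s)^2 := by rw [← pow_mul, show s*2 = n by omega]
      _ ≤ (A^s*C)^2 := by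
          apply pow_le_pow_left₀ (by positivity) hQ1
      _ = A^n * C^2 := by rw [mul_pow, ← pow_mul, show s*2 = n by omega]
  have hQ3 : (2:ℝ)^n ≤ (A/((n:ℝ)+1))^n * C^2 := by
    rw [div_pow, div_mul_eq_mul_div, le_div_iff₀ (by positivity)]
    calc (2:ℝ)^n * ((n:ℝ)+1)^n = (2*((n:ℝ)+1))^n := by rw [mul_pow]
      _ ≤ A^n * C^2 := hQ2
  have hxn : x^n = σ'/M := by
    rw [hxdef, ← Real.rpow_natCast ((σ'/M)^((1:ℝ)/n)) n, ← Real.rpow_mul (by positivity)]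
    rw [show (1:ℝ)/n * n = 1 by field_simp]
    exact Real.rpow_one _
  have hmain : 2^n * σ' ≤ M * ∏ j, ‖w - z j‖ := by
    have hσeq : σ' = M * x^n := by rw [hxn]; field_simp
    have hbase : 2*(Ω/((n:ℝ)+1))/π * ((3.03*π*Real.exp 1/Ω*x)/2) = A/((n:ℝ)+1) * x := by
      rw [hAdef]; field_simp
    calc (2:ℝ)^n * σ' ≤ ((A/((n:ℝ)+1))^n * C^2) * σ' := by
          apply mul_le_mul_of_nonneg_right hQ3 (le_of_lt hσ')
      _ = ((A/((n:ℝ)+1))^n * C^2) * (M * x^n) := by rw [← hσeq]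
      _ = M * ((A/((n:ℝ)+1)*x)^n * C^2) := by rw [mul_pow]; ring
      _ = M * ((2*(Ω/((n:ℝ)+1))/π * ((3.03*π*Real.exp 1/Ω*x)/2))^n * C^2) := by rw [hbase]
      _ = M * ((2*(Ω/((n:ℝ)+1))/π)^n * (C^2 * ((3.03*π*Real.exp 1/Ω*x)/2)^n)) := by
          rw [mul_pow]; ring
      _ ≤ M * ((2*h/π)^n * (C^2 * (τ/2)^n)) := by
          gcongr
          all_goals first | exact le_of_lt hM | exact hhlb | exact hτ | positivity | linarith [hx]
      _ ≤ M * ((2*h/π)^n * (∏ j, |y0 - y j|)) := by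
          have hside2 : C^2 * (τ/2)^n ≤ ∏ j, |y0 - y j| := by
            rw [sq]
            exact hside
          gcongr
          all_goals first | exact le_of_lt hM | positivity
      _ = M * ∏ j, (2/π * (h * |y0 - y j|)) := by
          have : ∏ j, (2/π * (h * |y0 - y j|)) = ∏ j, ((2*h/π) * |y0 - y j|) :=
            Finset.prod_congr rfl fun j _ => by ring
          rw [this, Finset.prod_mul_distrib, Finset.prod_const, Finset.card_univ,
            Fintype.card_fin]
      _ ≤ M * ∏ j, ‖w - z j‖ := by
          apply mul_le_mul_of_nonneg_left _ (le_of_lt hM)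
          exact Finset.prod_le_prod (fun j _ => by positivity) (fun j _ => hfac j)
  rw [← hTlb] at hmain
  linarith
end

section
/- Let y_1,…,y_{2p+1} be real numbers with |y_j| ≤ pτ for all j, let a_1,…,a_{2p+1} be complex numbers with ∑_j |a_j| ≤ (2p+1)2^{2p}M and ∑_j a_j y_j^k = 0 for k = 0,…,2p-1. Then for every ω with |ω| ≤ Ω and τΩ ≤ 1, |∑_j a_j e^{iy_jω}| ≤ ((2p+1)M/(2√(πp))) (eτΩ)^{2p} e^{p}. -/
open Real Complex Finset
open scoped Nat

lemma aux_stirling (n : ℕ) (hn : 1 ≤ n) :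
    Real.sqrt π * (Real.sqrt (2 * n) * ((n : ℝ) / Real.exp 1) ^ n) ≤ (n ! : ℝ) := by
  have hten : Filter.Tendsto (Stirling.stirlingSeq ∘ Nat.succ) Filter.atTop
      (nhds (Real.sqrt π)) :=
    Stirling.tendsto_stirlingSeq_sqrt_pi.comp (Filter.tendsto_add_atTop_nat 1)
  have h := Stirling.stirlingSeq'_antitone.le_of_tendsto hten (n - 1)
  have hn' : n - 1 + 1 = n := Nat.succ_pred_eq_of_pos hn
  have h2 : Real.sqrt π ≤ Stirling.stirlingSeq n := by
    simpa [Function.comp, hn'] using h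
  have hnp : (0:ℝ) < n := by exact_mod_cast hn
  have hD : 0 < Real.sqrt (2 * n) * ((n : ℝ) / Real.exp 1) ^ n := by positivity
  rw [Stirling.stirlingSeq] at h2
  exact (le_div_iff₀ hD).mp h2

theorem stmt_17 (p : ℕ) (hp : 1 ≤ p) (τ M Ω : ℝ) (hτ : 0 ≤ τ) (hΩ : 0 < Ω)
    (hτΩ : τ * Ω ≤ 1)
    (y : Fin (2 * p + 1) → ℝ) (hy : ∀ j, |y j| ≤ p * τ)
    (a : Fin (2 * p + 1) → ℂ)
    (hsum : ∑ j : Fin (2 * p + 1), ‖a j‖ ≤ (2 * p + 1) * 2 ^ (2 * p) * M)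
    (hmom : ∀ k : ℕ, k ≤ 2 * p - 1 → ∑ j : Fin (2 * p + 1), a j * (y j : ℂ) ^ k = 0)
    (ω : ℝ) (hω : |ω| ≤ Ω) :
    ‖∑ j : Fin (2 * p + 1), a j * Complex.exp (Complex.I * (y j * ω))‖ ≤
      ((2 * p + 1) * M / (2 * Real.sqrt (π * p))) * (Real.exp 1 * τ * Ω) ^ (2 * p) *
        Real.exp p := by
  have hp0 : (0:ℝ) < p := by exact_mod_cast hp
  -- M is nonnegative
  have hM : 0 ≤ M := by
    have h0 : (0:ℝ) ≤ ∑ j : Fin (2*p+1), ‖a j‖ :=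
      Finset.sum_nonneg fun j _ => norm_nonneg _
    by_contra hMn
    push_neg at hMn
    have hc : (0:ℝ) < (2 * ↑p + 1) * 2 ^ (2 * p) := by positivity
    nlinarith [h0.trans hsum, mul_pos hc (neg_pos.mpr hMn)]
  set x : ℝ := ↑p * τ * Ω with hxdef
  have hx0 : 0 ≤ x := by positivity
  have hxp : x ≤ (p:ℝ) := by
    have : x = ↑p * (τ * Ω) := by ring
    rw [this]
    exact mul_le_of_le_one_right (by positivity) hτΩ
  set C : ℝ := (2 * ↑p + 1) * 2 ^ (2 * p) * M with hCdef
  have hC0 : 0 ≤ C := by positivity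
  set z : Fin (2*p+1) → ℂ := fun j => Complex.I * (y j * ω) with hzdef
  have hznorm : ∀ j, ‖z j‖ ≤ x := by
    intro j
    have h1 : ‖z j‖ = |y j| * |ω| := by
      simp [hzdef, norm_mul, Complex.norm_real, Real.norm_eq_abs]
    rw [h1]
    calc |y j| * |ω| ≤ (↑p * τ) * Ω :=
          mul_le_mul (hy j) hω (abs_nonneg _) (by positivity)
      _ = x := by rw [hxdef]
  -- summability of exponential series terms
  have hsum1 : ∀ j : Fin (2*p+1), Summable (fun k : ℕ => a j * (z j ^ k / k !)) :=
    fun j => (NormedSpace.expSeries_div_summable (z j)).mul_left _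
  set f : ℕ → ℂ := fun k => ∑ j : Fin (2*p+1), a j * (z j ^ k / k !) with hfdef
  have hfsummable : Summable f := summable_sum fun j _ => hsum1 j
  have hS : (∑ j : Fin (2*p+1), a j * Complex.exp (z j)) = ∑' k : ℕ, f k := by
    rw [hfdef, Summable.tsum_finsetSum fun j _ => hsum1 j]
    refine Finset.sum_congr rfl fun j _ => ?_
    rw [Complex.exp_eq_exp_ℂ, NormedSpace.exp_eq_tsum_div, ← tsum_mul_left]
  -- vanishing of low-order terms
  have hvanish : ∀ k < 2*p, f k = 0 := by
    intro k hk
    have hm := hmom k (by omega)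
    have hterm : ∀ j : Fin (2*p+1), a j * (z j ^ k / k !) =
        (Complex.I ^ k * (ω:ℂ) ^ k / (k ! : ℂ)) * (a j * (y j : ℂ) ^ k) := by
      intro j
      rw [hzdef]
      simp only [mul_pow]
      ring
    rw [hfdef]
    simp only []
    rw [Finset.sum_congr rfl fun j _ => hterm j, ← Finset.mul_sum, hm, mul_zero]
  -- splitting the series
  have hsplit : (∑' k : ℕ, f k) = ∑' i : ℕ, f (i + 2*p) := by
    rw [← Summable.sum_add_tsum_nat_add (2*p) hfsummable]
    have : ∑ i ∈ Finset.range (2*p), f i = 0 :=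
      Finset.sum_eq_zero fun i hi => hvanish i (Finset.mem_range.mp hi)
    rw [this, zero_add]
  -- pointwise bound on f
  have hfbound : ∀ m : ℕ, ‖f m‖ ≤ C * (x ^ m / m !) := by
    intro m
    calc ‖f m‖ ≤ ∑ j : Fin (2*p+1), ‖a j * (z j ^ m / m !)‖ := norm_sum_le _ _
      _ ≤ ∑ j : Fin (2*p+1), ‖a j‖ * (x ^ m / m !) := by
          refine Finset.sum_le_sum fun j _ => ?_
          rw [norm_mul, norm_div, norm_pow, Complex.norm_natCast]
          gcongr
          · exact hznorm j
      _ = (∑ j : Fin (2*p+1), ‖a j‖) * (x ^ m / m !) := by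
          rw [← Finset.sum_mul]
      _ ≤ C * (x ^ m / m !) := by
          have : (0:ℝ) ≤ x ^ m / m ! := by positivity
          exact mul_le_mul_of_nonneg_right hsum this
  -- factorial comparison
  have hfact : ∀ i : ℕ, ((2*p)! * i ! : ℝ) ≤ ((i + 2*p)! : ℝ) := by
    intro i
    exact_mod_cast Nat.le_of_dvd (Nat.factorial_pos _)
      (by simpa [mul_comm] using Nat.factorial_mul_factorial_dvd_factorial_add i (2*p))
  have htermb : ∀ i : ℕ, x ^ (i + 2*p) / (i + 2*p)! ≤ x ^ (2*p) / (2*p)! * (x ^ i / i !) := by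
    intro i
    have h1 : x ^ (i + 2*p) / ((i + 2*p)! : ℝ) ≤ x ^ (i + 2*p) / (((2*p)! : ℝ) * i !) := by
      gcongr
      exact hfact i
    refine h1.trans_eq ?_
    rw [pow_add]
    have h2 : ((2*p)! : ℝ) ≠ 0 := by positivity
    have h3 : (i ! : ℝ) ≠ 0 := by positivity
    field_simp
  set g : ℕ → ℝ := fun i => C * (x ^ (2*p) / (2*p)!) * (x ^ i / i !) with hgdef
  have hgsummable : Summable g := (Real.summable_pow_div_factorial x).mul_left _
  have hbound2 : ∀ i : ℕ, ‖f (i + 2*p)‖ ≤ g i := by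
    intro i
    refine (hfbound (i + 2*p)).trans ?_
    rw [hgdef]
    have := htermb i
    calc C * (x ^ (i + 2*p) / (i + 2*p)!) ≤ C * (x ^ (2*p) / (2*p)! * (x ^ i / i !)) :=
          mul_le_mul_of_nonneg_left (htermb i) hC0
      _ = C * (x ^ (2*p) / (2*p)!) * (x ^ i / i !) := by ring
  have hnormsummable : Summable fun i : ℕ => ‖f (i + 2*p)‖ :=
    Summable.of_nonneg_of_le (fun i => norm_nonneg _) hbound2 hgsummable
  -- the main tsum bound
  have hmain : ‖∑ j : Fin (2*p+1), a j * Complex.exp (z j)‖ ≤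
      C * (x ^ (2*p) / (2*p)!) * Real.exp x := by
    rw [hS, hsplit]
    calc ‖∑' i : ℕ, f (i + 2*p)‖ ≤ ∑' i : ℕ, ‖f (i + 2*p)‖ :=
          norm_tsum_le_tsum_norm hnormsummable
      _ ≤ ∑' i : ℕ, g i := Summable.tsum_le_tsum hbound2 hnormsummable hgsummable
      _ = C * (x ^ (2*p) / (2*p)!) * ∑' i : ℕ, x ^ i / i ! := tsum_mul_left
      _ = C * (x ^ (2*p) / (2*p)!) * Real.exp x := by
          rw [Real.exp_eq_exp_ℝ, NormedSpace.exp_eq_tsum_div]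
  -- Stirling-based key inequality
  have key : (2:ℝ)^(2*p) * (p:ℝ)^(2*p) / (2*p)! ≤
      Real.exp 1 ^ (2*p) / (2 * Real.sqrt (π * p)) := by
    have hst := aux_stirling (2*p) (by omega)
    have hsq1 : Real.sqrt (2 * ((2*p : ℕ) : ℝ)) = 2 * Real.sqrt p := by
      rw [show (2:ℝ) * ((2*p : ℕ) : ℝ) = (2:ℝ)^2 * p by push_cast; ring,
        Real.sqrt_mul (by positivity), Real.sqrt_sq (by norm_num)]
    have hsqp : 0 < Real.sqrt (π * p) := Real.sqrt_pos.mpr (by positivity)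
    rw [div_le_div_iff₀ (by positivity) (by positivity)]
    -- goal: 2^{2p} * p^{2p} * (2 * √(πp)) ≤ e^{2p} * (2p)!
    have h4 : Real.exp 1 ^ (2*p) * (Real.sqrt π * (Real.sqrt (2 * ((2*p:ℕ):ℝ)) *
        (((2*p:ℕ):ℝ) / Real.exp 1) ^ (2*p)))
        = 2 ^ (2*p) * (p:ℝ) ^ (2*p) * (2 * Real.sqrt (π * p)) := by
      rw [hsq1, div_pow, Real.sqrt_mul Real.pi_nonneg]
      have he : Real.exp 1 ^ (2*p) ≠ 0 := by positivity
      field_simp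
      push_cast; ring
    calc 2 ^ (2*p) * (p:ℝ) ^ (2*p) * (2 * Real.sqrt (π * p))
        = Real.exp 1 ^ (2*p) * (Real.sqrt π * (Real.sqrt (2 * ((2*p:ℕ):ℝ)) *
            (((2*p:ℕ):ℝ) / Real.exp 1) ^ (2*p))) := h4.symm
      _ ≤ Real.exp 1 ^ (2*p) * ((2*p)! : ℝ) := by
          exact mul_le_mul_of_nonneg_left hst (by positivity)
  -- final arithmetic
  have hfinal : C * (x ^ (2*p) / (2*p)!) * Real.exp x ≤
      ((2 * ↑p + 1) * M / (2 * Real.sqrt (π * ↑p))) * (Real.exp 1 * τ * Ω) ^ (2 * p) *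
        Real.exp p := by
    have hx2 : x ^ (2*p) = (p:ℝ)^(2*p) * (τ*Ω)^(2*p) := by
      rw [show x = ↑p * (τ*Ω) by ring, mul_pow]
    have hexp : Real.exp x ≤ Real.exp p := Real.exp_le_exp.mpr hxp
    have hcoef : C * (x ^ (2*p) / (2*p)!) ≤
        ((2 * ↑p + 1) * M / (2 * Real.sqrt (π * ↑p))) * (Real.exp 1 * τ * Ω) ^ (2 * p) := by
      have h1 : C * (x ^ (2*p) / (2*p)!) =
          ((2 * ↑p + 1) * M) * ((2:ℝ)^(2*p) * (p:ℝ)^(2*p) / (2*p)!) * (τ*Ω)^(2*p) := by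
        rw [hCdef, hx2]; ring
      have h2 : ((2 * ↑p + 1) * M / (2 * Real.sqrt (π * ↑p))) * (Real.exp 1 * τ * Ω) ^ (2 * p)
          = ((2 * ↑p + 1) * M) * (Real.exp 1 ^ (2*p) / (2 * Real.sqrt (π * ↑p))) * (τ*Ω)^(2*p) := by
        rw [show Real.exp 1 * τ * Ω = Real.exp 1 * (τ*Ω) by ring, mul_pow]
        ring
      rw [h1, h2]
      have h3 : (0:ℝ) ≤ (2 * ↑p + 1) * M := by positivity
      have h4 : (0:ℝ) ≤ (τ*Ω)^(2*p) := by positivity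
      exact mul_le_mul_of_nonneg_right (mul_le_mul_of_nonneg_left key h3) h4
    calc C * (x ^ (2*p) / (2*p)!) * Real.exp x
        ≤ C * (x ^ (2*p) / (2*p)!) * Real.exp p := by
          exact mul_le_mul_of_nonneg_left hexp (by positivity)
      _ ≤ ((2 * ↑p + 1) * M / (2 * Real.sqrt (π * ↑p))) * (Real.exp 1 * τ * Ω) ^ (2 * p) *
            Real.exp p := mul_le_mul_of_nonneg_right hcoef (Real.exp_nonneg _)
  exact hmain.trans hfinal
end

section
/- Let n ≥ 2, p = n/2 with n even, 0 < σ' < M, Ω > 0, and τ = (0.96 e^{-3/2}/Ω)(σ'/M)^{1/n}. Then there exist equally spaced points y_1,…,y_{n+1} with spacing τ, an index k, and complex amplitudes â_j (j ≠ k) such that the measure μ̂ = ∑_{j≠k} â_j δ_{y_j} satisfies |∑_{j≠k} â_j e^{iy_jω} - M e^{iy_kω}| < σ' for all ω ∈ [-Ω, Ω]. -/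
open Real Complex Finset

theorem stmt_18 (n : ℕ) (hn : 2 ≤ n) (hneven : Even n)
    (M σ' Ω : ℝ) (hσ' : 0 < σ') (hσ'M : σ' < M) (hΩ : 0 < Ω)
    (τ : ℝ) (hτ : τ = 0.96 * Real.exp (-(3 / 2 : ℝ)) / Ω * (σ' / M) ^ ((1 : ℝ) / n)) :
    ∃ (y0 : ℝ) (k : Fin (n + 1)) (ahat : Fin (n + 1) → ℂ),
      ∀ ω : ℝ, ω ∈ Set.Icc (-Ω) Ω →
        ‖(∑ j ∈ Finset.univ.erase k,
            ahat j * Complex.exp (Complex.I * ((y0 + (j : ℕ) * τ) * ω)))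
          - M * Complex.exp (Complex.I * ((y0 + (k : ℕ) * τ) * ω))‖ < σ' := by
  have hM : 0 < M := hσ'.trans hσ'M
  have hn0 : n ≠ 0 := by omega
  set c : ℝ := 0.96 * Real.exp (-(3 / 2 : ℝ)) with hc
  set r : ℝ := (σ' / M) ^ ((1 : ℝ) / n) with hrdef
  have hc_pos : 0 < c := by positivity
  have hc_lt : c < 0.96 := by
    have := Real.exp_lt_one_iff.mpr (by norm_num : -(3/2 : ℝ) < 0)
    nlinarith
  have hr_pos : 0 < r := Real.rpow_pos_of_pos (by positivity) _
  have hr_lt : r < 1 := by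
    apply Real.rpow_lt_one (by positivity) ((div_lt_one hM).mpr hσ'M)
    positivity
  have hrn : r ^ n = σ' / M := by
    rw [hrdef, ← Real.rpow_natCast ((σ' / M) ^ ((1:ℝ)/n)) n, ← Real.rpow_mul (by positivity)]
    rw [one_div, inv_mul_cancel₀ (by exact_mod_cast hn0), Real.rpow_one]
  have hτΩ : τ * Ω = c * r := by
    rw [hτ]; field_simp
  have hτ_pos : 0 < τ := by
    rw [hτ]; positivity
  refine ⟨0, 0, fun j => -(M : ℂ) * (-1) ^ (j : ℕ) * (n.choose j), ?_⟩
  intro ω hω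
  obtain ⟨hω1, hω2⟩ := hω
  set z : ℂ := Complex.exp (Complex.I * ((τ * ω : ℝ) : ℂ)) with hz
  have hterm : ∀ j : Fin (n + 1),
      Complex.exp (Complex.I * ((((0:ℝ):ℂ) + ((j : ℕ) : ℂ) * (τ:ℂ)) * (ω:ℂ))) = z ^ (j : ℕ) := by
    intro j
    rw [hz, ← Complex.exp_nat_mul]
    push_cast
    ring_nf
  have key : (∑ j ∈ Finset.univ.erase (0 : Fin (n + 1)),
        (-(M : ℂ) * (-1) ^ (j : ℕ) * (n.choose j)) *
          Complex.exp (Complex.I * ((((0:ℝ):ℂ) + ((j : ℕ) : ℂ) * (τ:ℂ)) * (ω:ℂ))))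
      - (M : ℂ) * Complex.exp (Complex.I * ((((0:ℝ):ℂ) + ((((0 : Fin (n+1)) : ℕ)) : ℂ) * (τ:ℂ)) * (ω:ℂ)))
      = -(M : ℂ) * (1 - z) ^ n := by
    rw [Finset.sum_erase_eq_sub (Finset.mem_univ _)]
    simp only [hterm]
    have h0 : ((0 : Fin (n + 1)) : ℕ) = 0 := rfl
    have hsum : (∑ j : Fin (n + 1), (-(M : ℂ) * (-1) ^ (j : ℕ) * (n.choose j)) * z ^ (j : ℕ))
        = -(M : ℂ) * (1 - z) ^ n := by
      rw [Fin.sum_univ_eq_sum_range (fun j => (-(M : ℂ) * (-1) ^ j * (n.choose j)) * z ^ j)]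
      rw [sub_eq_neg_add, add_pow, Finset.mul_sum]
      apply Finset.sum_congr rfl
      intro j hj
      rw [neg_pow]
      ring
    rw [hsum, h0]
    simp
  beta_reduce
  rw [key]
  have habs : ‖-(M : ℂ) * (1 - z) ^ n‖ = M * ‖1 - z‖ ^ n := by
    rw [norm_mul, norm_pow, norm_neg, Complex.norm_real, Real.norm_eq_abs, abs_of_pos hM]
  rw [habs]
  -- bound |1 - z|
  have hτω_le : |τ * ω| ≤ τ * Ω := by
    rw [abs_mul, abs_of_pos hτ_pos]
    exact mul_le_mul_of_nonneg_left (abs_le.mpr ⟨hω1, hω2⟩) hτ_pos.le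
  have hτΩ_lt1 : τ * Ω < 1 := by
    rw [hτΩ]
    nlinarith
  have habs_arg : ‖Complex.I * ((τ * ω : ℝ) : ℂ)‖ = |τ * ω| := by
    rw [norm_mul, Complex.norm_I, Complex.norm_real, Real.norm_eq_abs, one_mul]
  have h1z : ‖1 - z‖ ≤ 2 * (τ * Ω) := by
    have h := Complex.norm_exp_sub_one_le (x := Complex.I * ((τ * ω : ℝ) : ℂ))
      (by rw [habs_arg]; linarith)
    rw [← hz] at h
    calc ‖1 - z‖ = ‖z - 1‖ := by rw [norm_sub_rev]
      _ ≤ 2 * ‖Complex.I * ((τ * ω : ℝ) : ℂ)‖ := h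
      _ = 2 * |τ * ω| := by rw [habs_arg]
      _ ≤ 2 * (τ * Ω) := by linarith
  have hbound : M * ‖1 - z‖ ^ n ≤ M * (2 * (c * r)) ^ n := by
    apply mul_le_mul_of_nonneg_left _ hM.le
    apply pow_le_pow_left₀ (norm_nonneg _)
    rw [← hτΩ]; exact h1z
  have h2c_lt : 2 * c < 1 := by
    have h15 : (2.5 : ℝ) ≤ Real.exp (3 / 2) := by
      have := Real.add_one_le_exp (3 / 2 : ℝ)
      linarith
    have : Real.exp (-(3 / 2 : ℝ)) ≤ 1 / 2.5 := by
      rw [Real.exp_neg]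
      rw [inv_le_comm₀ (Real.exp_pos _) (by norm_num)] at *
      · linarith [Real.exp_pos (3/2 : ℝ)]
    nlinarith
  have hfinal : M * (2 * (c * r)) ^ n < σ' := by
    have : (2 * (c * r)) ^ n = (2 * c) ^ n * r ^ n := by rw [← mul_pow]; ring_nf
    rw [this, hrn]
    have h2cn : (2 * c) ^ n < 1 := pow_lt_one₀ (by positivity) h2c_lt hn0
    calc M * ((2 * c) ^ n * (σ' / M)) = (2 * c) ^ n * σ' := by field_simp
      _ < 1 * σ' := by apply mul_lt_mul_of_pos_right h2cn hσ'
      _ = σ' := one_mul σ'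
  linarith [hbound, hfinal]
end
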